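/- arXiv:math/0105141 — 2 statements merged into one kernel-verified Lean document; each statement's English description precedes it below -/
import Mathlib

section
/- Let Ω ⊂ ℝⁿ be a bounded open set of class C^{1,1}, let R > 0, let Ω₁ ∈ U_R(Ω) with Γ := ∂Ω₁ and Ω₂ := Ω\closure(Ω₁). There exist positive constants c and β₀, depending only on R, such that for every β ≥ β₀ there are functions z_{1,β} : Ω₁ → ℝ and z_{2,β} : Ω₂ → ℝ of class W^{2,∞} with: (i) 1/2 ≤ z_{i,β} ≤ 1 in Ω_i for i = 1,2, and z_{2,β} ≡ 1/2 in a neighbourhood of ∂Ω; (ii) Δz_{i,β} ≤ c β z_{i,β} in Ω_i for i = 1,2; (iii) z_{1,β}(x) = z_{2,β}(x) = 1 and ∂_ν z_{1,β}(x) = −∂_ν z_{2,β}(x) ≥ √β for every x ∈ Γ; (iv) ‖∇z_{i,β}‖_∞ ≤ c√β and ‖∇²z_{i,β}‖_∞ ≤ cβ. -/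
open MeasureTheory Metric Set Filter Topology RealInnerProductSpace
open scoped ENNReal NNReal

noncomputable section

/-- Euclidean `n`-space. -/
abbrev En (n : ℕ) : Type := EuclideanSpace ℝ (Fin n)

variable {n : ℕ}

/-- The signed distance function of a set `E`,
`d_E(x) = dist(x, E) - dist(x, Eᶜ)`. -/
def sgnDist (E : Set (En n)) (x : En n) : ℝ :=
  Metric.infDist x E - Metric.infDist x Eᶜ

/-- The class `U_R`: open sets satisfying the uniform two-sided tangent ball condition
of radius `R`. -/
def UR (R : ℝ) (E : Set (En n)) : Prop :=
  IsOpen E ∧ ∀ p ∈ frontier E, ∃ p' p'' : En n,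
    dist p p' = R ∧ dist p p'' = R ∧ ball p' R ⊆ E ∧ ball p'' R ⊆ Eᶜ

/-- The class `U_R(Ω)`: members of `U_R` contained in `Ω` at distance at least `R`
from `∂Ω`. -/
def URin (R : ℝ) (Ω E : Set (En n)) : Prop :=
  UR R E ∧ E ⊆ Ω ∧ ∀ x ∈ E, ∀ y ∈ frontier Ω, R ≤ dist x y

/-- Open sets of class `C^{1,1}` (uniform two-sided tangent ball condition). -/
def IsC11Set (E : Set (En n)) : Prop := IsOpen E ∧ ∃ R > 0, UR R E

/-- Open sets with boundary of class `C^{2,α}`, expressed through the regularity of the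
signed distance function near the boundary. -/
def IsC2AlphaSet (α : ℝ) (E : Set (En n)) : Prop :=
  IsOpen E ∧ ∃ δ > 0, ContDiffOn ℝ 2 (sgnDist E) (thickening δ (frontier E)) ∧
    ∃ Λ : ℝ, ∀ x ∈ thickening δ (frontier E), ∀ y ∈ thickening δ (frontier E),
      ‖fderiv ℝ (fderiv ℝ (sgnDist E)) x - fderiv ℝ (fderiv ℝ (sgnDist E)) y‖ ≤
        Λ * dist x y ^ α

/-- `Λ^α(∂E) ≤ Λ`: the `α`-Hölder seminorm of the (tangential) gradient of the unit
normal field `ν = ∇ d_E` along `∂E` is at most `Λ`. -/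
def HolderNormalBound (α : ℝ) (E : Set (En n)) (Λ : ℝ) : Prop :=
  ∀ x ∈ frontier E, ∀ y ∈ frontier E,
    ‖fderiv ℝ (gradient (sgnDist E)) x - fderiv ℝ (gradient (sgnDist E)) y‖ ≤
      Λ * dist x y ^ α

/-- The Laplacian of a real-valued function on Euclidean space. -/
def lapl (u : En n → ℝ) (x : En n) : ℝ :=
  ∑ i : Fin n, fderiv ℝ (fun y => fderiv ℝ u y (EuclideanSpace.single i 1)) x
    (EuclideanSpace.single i 1)

/-- The divergence of a vector field on Euclidean space. -/
def diverg (V : En n → En n) (x : En n) : ℝ :=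
  ∑ i : Fin n, ⟪fderiv ℝ V x (EuclideanSpace.single i 1), EuclideanSpace.single i 1⟫

/-- `ν` is the outer unit normal to `E` at `x`, in the sense of interior and exterior
tangent balls. -/
def IsOuterNormal (E : Set (En n)) (x ν : En n) : Prop :=
  ‖ν‖ = 1 ∧ ∃ r > 0, ball (x - r • ν) r ⊆ E ∧ ball (x + r • ν) r ⊆ Eᶜ

/-- Homogeneous Neumann boundary condition `∂_ν u = 0` on `∂U`, in the sense of
boundary traces of the normal derivative. -/
def NeumannZero (u : En n → ℝ) (U : Set (En n)) : Prop :=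
  ∀ x ∈ frontier U, ∀ ν : En n, IsOuterNormal U x ν →
    Tendsto (fun y => fderiv ℝ u y ν) (𝓝[U] x) (𝓝 0)

/-- Conormal homogeneous Neumann boundary condition `A ∇u · ν = 0` on `∂U`. -/
def CoNeumannZero (A : En n → (En n →L[ℝ] En n)) (u : En n → ℝ) (U : Set (En n)) : Prop :=
  ∀ x ∈ frontier U, ∀ ν : En n, IsOuterNormal U x ν →
    Tendsto (fun y => ⟪A y (gradient u y), ν⟫) (𝓝[U] x) (𝓝 0)

/-- `u` is a (classical) solution of the Neumann problem `Δu = β (u - g)` in `U`,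
`∂_ν u = 0` on `∂U`. -/
def IsNeumannSolution (U : Set (En n)) (β : ℝ) (g u : En n → ℝ) : Prop :=
  (∀ x ∈ U, ContDiffAt ℝ 2 u x) ∧ (∀ x ∈ U, lapl u x = β * (u x - g x)) ∧ NeumannZero u U

/-- `g ∈ W^{1,∞}(U)` with norm at most `M`: `g` is bounded by `M` and `M`-Lipschitz on
each connected component of `U`. -/
def MemW1inf (U : Set (En n)) (g : En n → ℝ) (M : ℝ) : Prop :=
  (∀ x ∈ U, |g x| ≤ M) ∧
  ∀ x ∈ U, LipschitzOnWith (Real.toNNReal M) g (connectedComponentIn U x)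

/-- `g ∈ W^{2,∞}(U)` with norm at most `M`. -/
def MemW2inf (U : Set (En n)) (g : En n → ℝ) (M : ℝ) : Prop :=
  (∀ x ∈ U, |g x| ≤ M) ∧ (∀ x ∈ U, DifferentiableAt ℝ g x) ∧
  (∀ x ∈ U, ‖fderiv ℝ g x‖ ≤ M) ∧
  ∀ x ∈ U, LipschitzOnWith (Real.toNNReal M) (fun y => fderiv ℝ g y)
    (connectedComponentIn U x)

/-- The `C^{0,γ}(s)` norm of `f` is at most `M`. -/
def HolderBound (γ : ℝ) (s : Set (En n)) (f : En n → ℝ) (M : ℝ) : Prop :=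
  (∀ x ∈ s, |f x| ≤ M) ∧ ∀ x ∈ s, ∀ y ∈ s, |f x - f y| ≤ M * dist x y ^ γ

/-- Nontangential one-sided trace `a` of `g` at `x` from the side of the unit vector
`ν`: the limit of `g` along the open cone around `ν` with vertex `x`. -/
def ConeTrace (g : En n → ℝ) (x ν : En n) (a : ℝ) : Prop :=
  Tendsto g (𝓝[{y | ‖y - x‖ < 2 * ⟪ν, y - x⟫}] x) (𝓝 a)

/-- `g` has a jump of size larger than `S` at `x` (upper trace minus lower trace
exceeds `S`). -/
def JumpGT (g : En n → ℝ) (x : En n) (S : ℝ) : Prop :=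
  ∃ ν : En n, ‖ν‖ = 1 ∧ ∃ a b : ℝ, ConeTrace g x ν a ∧ ConeTrace g x (-ν) b ∧ S < |a - b|

/-- `g` has a nontrivial jump at `x` (i.e. `x ∈ S_g`). -/
def JumpNE (g : En n → ℝ) (x : En n) : Prop :=
  ∃ ν : En n, ‖ν‖ = 1 ∧ ∃ a b : ℝ, ConeTrace g x ν a ∧ ConeTrace g x (-ν) b ∧ a ≠ b

/-- The (non-homogeneous) Mumford–Shah energy of the pair `(u, K)`:
`∫_{Ω \ K} |∇u|² dx + H^{n-1}(K) + β ∫_{Ω \ K} (u - g)² dx`. -/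
def MSEnergy (Ω : Set (En n)) (β : ℝ) (g u : En n → ℝ) (K : Set (En n)) : ℝ≥0∞ :=
  ENNReal.ofReal (∫ x in Ω \ K, ‖fderiv ℝ u x‖ ^ 2) + μH[((n : ℝ) - 1)] K +
  ENNReal.ofReal (β * ∫ x in Ω \ K, (u x - g x) ^ 2)

/-- Admissible pairs `(u, K)` for the (strong formulation of the) Mumford–Shah
functional on `Ω`: `K` is a closed set of singularities contained in `closure Ω` and
`u` is differentiable on `Ω \ K`. -/
def MSAdm (Ω : Set (En n)) (u : En n → ℝ) (K : Set (En n)) : Prop :=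
  K ⊆ closure Ω ∧ IsClosed K ∧ ∀ x ∈ Ω \ K, DifferentiableAt ℝ u x

/-- `u`, with singular set `K`, is the unique absolute minimizer of `F_{β,g}` over
(strong) Mumford–Shah competitors on `Ω`. -/
def UniqueMinimizer (Ω : Set (En n)) (β : ℝ) (g u : En n → ℝ) (K : Set (En n)) : Prop :=
  MSAdm Ω u K ∧ ∀ v L, MSAdm Ω v L →
    MSEnergy Ω β g u K ≤ MSEnergy Ω β g v L ∧
    (MSEnergy Ω β g v L ≤ MSEnergy Ω β g u K → ∀ᵐ x ∂(volume.restrict Ω), v x = u x)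

/-- A simple arc of class `C³` up to the endpoints, parametrized on `[0,1]`. -/
def IsC3Arc (γ : ℝ → En n) : Prop :=
  ContDiffOn ℝ 3 γ (Icc 0 1) ∧ InjOn γ (Ico 0 1) ∧
  ∀ t ∈ Icc (0:ℝ) 1, derivWithin γ (Icc 0 1) t ≠ 0

/-- The set of vertices (endpoints of the boundary arcs) of a curvilinear polygon. -/
def polyVertices {k : ℕ} (arcs : Fin k → ℝ → En n) : Set (En n) :=
  ⋃ j, {arcs j 0, arcs j 1}

/-- A curvilinear polygon: a bounded connected open set whose boundary is a finite
union of simple `C³` arcs, meeting only at their endpoints, at corners with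
(interior) angles in `(0, π)`. -/
def CurvPolygon (Ω : Set (En n)) (k : ℕ) (arcs : Fin k → ℝ → En n) : Prop :=
  IsOpen Ω ∧ Bornology.IsBounded Ω ∧ Ω.Nonempty ∧ IsConnected Ω ∧
  (∀ j, IsC3Arc (arcs j)) ∧
  (frontier Ω = ⋃ j, arcs j '' Icc 0 1) ∧
  (∀ i j, i ≠ j → (arcs i '' Ioo 0 1) ∩ (arcs j '' Icc 0 1) = ∅) ∧
  (∀ j, ∀ t ∈ ({0, 1} : Set ℝ), ∃ w : En n, w ≠ 0 ∧ ∃ ε > 0,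
      ∀ x ∈ Ω ∩ ball (arcs j t) ε, 0 < ⟪w, x - arcs j t⟫) ∧
  (∀ i j, i ≠ j → ∀ s ∈ ({0, 1} : Set ℝ), ∀ t ∈ ({0, 1} : Set ℝ), arcs i s = arcs j t →
      LinearIndependent ℝ
        ![derivWithin (arcs i) (Icc 0 1) s, derivWithin (arcs j) (Icc 0 1) t])

/-- A simple closed curve of class `C^{2,α}` (parametrized periodically). -/
def IsClosedC2AlphaCurve (α : ℝ) (γ : ℝ → En n) : Prop :=
  (∀ t, γ (t + 1) = γ t) ∧ ContDiff ℝ 2 γ ∧ InjOn γ (Ico 0 1) ∧ (∀ t, deriv γ t ≠ 0) ∧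
  ∃ Λ : ℝ, ∀ s t : ℝ, ‖deriv (deriv γ) s - deriv (deriv γ) t‖ ≤ Λ * |s - t| ^ α

/-- A simple arc of class `C^{2,α}`, of class `C³` near its endpoints, contained in the
curvilinear polygon `Ω` except for its endpoints, which lie on `∂Ω` away from the
vertices and at which the arc meets `∂Ω` orthogonally. -/
def IsTransversalArc (Ω : Set (En n)) {k : ℕ} (arcs : Fin k → ℝ → En n) (α : ℝ)
    (γ : ℝ → En n) : Prop :=
  ContDiffOn ℝ 2 γ (Icc 0 1) ∧ InjOn γ (Icc 0 1) ∧
  (∀ t ∈ Icc (0:ℝ) 1, derivWithin γ (Icc 0 1) t ≠ 0) ∧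
  (∃ η > 0, ContDiffOn ℝ 3 γ (Icc 0 η) ∧ ContDiffOn ℝ 3 γ (Icc (1 - η) 1)) ∧
  γ '' Ioo 0 1 ⊆ Ω ∧
  γ 0 ∈ frontier Ω \ polyVertices arcs ∧ γ 1 ∈ frontier Ω \ polyVertices arcs ∧
  (∀ j, ∀ s ∈ Icc (0:ℝ) 1, ∀ t ∈ ({0, 1} : Set ℝ), arcs j s = γ t →
      ⟪derivWithin γ (Icc 0 1) t, derivWithin (arcs j) (Icc 0 1) s⟫ = 0) ∧
  ∃ Λ : ℝ, ∀ s ∈ Icc (0:ℝ) 1, ∀ t ∈ Icc (0:ℝ) 1,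
    ‖derivWithin (derivWithin γ (Icc 0 1)) (Icc 0 1) s -
      derivWithin (derivWithin γ (Icc 0 1)) (Icc 0 1) t‖ ≤ Λ * |s - t| ^ α

/-- Setting of Theorem `cor1`: `Ω ⊆ ℝⁿ` bounded of class `C^{1,1}` and `Γ` the union of
the boundaries of finitely many disjoint `C^{2,α}` sets in `U_R(Ω)` at mutual distance
at least `R`. -/
def SettingA (Ω Γ : Set (En n)) : Prop :=
  IsC11Set Ω ∧ Bornology.IsBounded Ω ∧
  ∃ α ∈ Ioo (0:ℝ) 1, ∃ R > 0, ∃ k : ℕ, ∃ O : Fin k → Set (En n),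
    (∀ i, IsC2AlphaSet α (O i)) ∧ (∀ i, URin R Ω (O i)) ∧
    (∀ i j, i ≠ j → ∀ x ∈ O i, ∀ y ∈ O j, R ≤ dist x y) ∧
    Γ = ⋃ i, frontier (O i)

/-- Setting of Theorem `cor2`: `Ω ⊆ ℝ²` a curvilinear polygon and `Γ` a finite disjoint
union of `C^{2,α}` curves, each either closed and contained in `Ω`, or meeting `∂Ω`
orthogonally at two regular points. -/
def SettingB (Ω Γ : Set (En n)) : Prop :=
  n = 2 ∧ ∃ k : ℕ, ∃ arcs : Fin k → ℝ → En n, CurvPolygon Ω k arcs ∧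
    ∃ α ∈ Ioo (0:ℝ) 1, ∃ m : ℕ, ∃ γ : Fin m → ℝ → En n,
      (∀ j, (IsClosedC2AlphaCurve α (γ j) ∧ range (γ j) ⊆ Ω) ∨
        IsTransversalArc Ω arcs α (γ j)) ∧
      (∀ i j : Fin m, i ≠ j → Disjoint (γ i '' Icc 0 1) (γ j '' Icc 0 1)) ∧
      Γ = ⋃ j, γ j '' Icc 0 1

/-- The affine interpolation of a discrete evolution `U : ℕ → (En n → ℝ)` with time
step `δ`. -/
def affInterp (δ : ℝ) (U : ℕ → En n → ℝ) (t : ℝ) (x : En n) : ℝ :=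
  (1 - (t / δ - (⌊t / δ⌋₊ : ℝ))) * U ⌊t / δ⌋₊ x +
    (t / δ - (⌊t / δ⌋₊ : ℝ)) * U (⌊t / δ⌋₊ + 1) x

/-- `v` is a minimizing movement for the homogeneous Mumford–Shah functional with
initial datum `u₀`: for a suitable sequence `δ k ↓ 0`, the affine interpolations of the
discrete minimizing schemes converge to `v t` in `L²(Ω)` for every `t > 0`. -/
def IsMinimizingMovement (Ω : Set (En n)) (u₀ : En n → ℝ) (v : ℝ → En n → ℝ) : Prop :=
  ∃ δ : ℕ → ℝ, (∀ k, 0 < δ k) ∧ Tendsto δ atTop (𝓝 0) ∧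
    ∃ U : ℕ → ℕ → En n → ℝ, ∃ K : ℕ → ℕ → Set (En n),
      (∀ k, U k 0 = u₀) ∧
      (∀ k i, MSAdm Ω (U k (i + 1)) (K k (i + 1)) ∧ ∀ w L, MSAdm Ω w L →
        MSEnergy Ω (1 / δ k) (U k i) (U k (i + 1)) (K k (i + 1)) ≤
          MSEnergy Ω (1 / δ k) (U k i) w L) ∧
      ∀ t > 0, Tendsto (fun k => ∫ x in Ω, (affInterp (δ k) (U k) t x - v t x) ^ 2)
        atTop (𝓝 0)


namespace S5

/-! ### Real auxiliary function ψ -/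

/-- `qq v = relu(v)^2/2`, a C¹ antiderivative of `relu`. -/
def qq (s : ℝ) : ℝ := max s 0 ^ 2 / 2

lemma hasDerivAt_qq (s : ℝ) : HasDerivAt qq (max s 0) s := by
  rcases lt_trichotomy s 0 with h | h | h
  · have hev : qq =ᶠ[𝓝 s] fun _ => (0:ℝ) := by
      filter_upwards [Iio_mem_nhds h] with t ht
      simp [qq, max_eq_right (le_of_lt (mem_Iio.mp ht))]
    have := (hasDerivAt_const s (0:ℝ)).congr_of_eventuallyEq hev
    simpa [max_eq_right h.le] using this
  · subst h
    rw [hasDerivAt_iff_isLittleO, Asymptotics.isLittleO_iff]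
    intro c hc
    filter_upwards [Metric.ball_mem_nhds 0 (show (0:ℝ) < 2*c by linarith)] with t ht
    rw [mem_ball, Real.dist_eq, sub_zero] at ht
    have h0 : qq 0 = 0 := by simp [qq]
    have hb : ‖qq t - qq 0 - (t - 0) • max (0:ℝ) 0‖ = qq t := by
      rw [h0, max_self]
      simp only [sub_zero, smul_eq_mul, mul_zero, sub_zero]
      rw [Real.norm_eq_abs, abs_of_nonneg (by unfold qq; exact div_nonneg (sq_nonneg _) (by norm_num))]
    rw [hb, Real.norm_eq_abs, sub_zero]
    have : qq t ≤ t^2/2 := by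
      unfold qq
      rcases le_total t 0 with h' | h'
      · rw [max_eq_right h']; nlinarith [sq_nonneg t]
      · exact le_of_eq (by rw [max_eq_left h'])
    have habs := abs_lt.1 ht
    nlinarith [abs_nonneg t, le_abs_self t, neg_abs_le t, sq_abs t]
  · have hev : qq =ᶠ[𝓝 s] fun t => t^2/2 := by
      filter_upwards [Ioi_mem_nhds h] with t ht
      simp [qq, max_eq_left (le_of_lt (mem_Ioi.mp ht))]
    have h2 : HasDerivAt (fun t : ℝ => t^2/2) s s := by
      have := (hasDerivAt_pow 2 s).div_const 2
      simpa using this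
    have := h2.congr_of_eventuallyEq hev
    simpa [max_eq_left h.le] using this

/-- The profile function ψ. -/
def psi (β t₀ s : ℝ) : ℝ := 1/2 + β * (qq (s + t₀) - 2 * qq s + qq (s - t₀))

/-- Its derivative. -/
def psi' (β t₀ s : ℝ) : ℝ := β * (max (s + t₀) 0 - 2 * max s 0 + max (s - t₀) 0)

lemma hasDerivAt_psi (β t₀ s : ℝ) : HasDerivAt (psi β t₀) (psi' β t₀ s) s := by
  have h1 : HasDerivAt (fun s : ℝ => qq (s + t₀)) (max (s + t₀) 0) s := by
    simpa [Function.comp_def] using (hasDerivAt_qq (s + t₀)).comp s ((hasDerivAt_id s).add_const t₀)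
  have h3 : HasDerivAt (fun s : ℝ => qq (s - t₀)) (max (s - t₀) 0) s := by
    simpa [Function.comp_def] using (hasDerivAt_qq (s - t₀)).comp s ((hasDerivAt_id s).sub_const t₀)
  have h2 := hasDerivAt_qq s
  exact (((h1.sub (h2.const_mul 2)).add h3).const_mul β).const_add (1/2 : ℝ)

lemma psi'_eq (β : ℝ) {t₀ : ℝ} (ht : 0 ≤ t₀) (s : ℝ) :
    psi' β t₀ s = β * max (t₀ - |s|) 0 := by
  unfold psi'
  rcases le_total s 0 with hs | hs
  · rcases le_total s (-t₀) with h | h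
    · rw [abs_of_nonpos hs, max_eq_right (by linarith), max_eq_right hs,
        max_eq_right (by linarith), max_eq_right (by linarith)]
      ring
    · rw [abs_of_nonpos hs, max_eq_left (by linarith), max_eq_right hs,
        max_eq_right (by linarith), max_eq_left (by linarith)]
      ring
  · rcases le_total s t₀ with h | h
    · rw [abs_of_nonneg hs, max_eq_left (by linarith), max_eq_left hs,
        max_eq_right (by linarith), max_eq_left (by linarith)]
      ring
    · rw [abs_of_nonneg hs, max_eq_left (by linarith), max_eq_left hs,
        max_eq_left (by linarith), max_eq_right (by linarith)]
      ring

lemma psi'_lip {β t₀ : ℝ} (hβ : 0 ≤ β) (a b : ℝ) :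
    |psi' β t₀ a - psi' β t₀ b| ≤ 4 * β * |a - b| := by
  have key : ∀ u v : ℝ, |max u 0 - max v 0| ≤ |u - v| := by
    intro u v
    rcases le_total u 0 with h | h <;> rcases le_total v 0 with h' | h' <;>
      simp [max_eq_right, max_eq_left, h, h'] <;> rw [abs_le] <;>
      constructor <;> cases abs_cases (u - v) <;> linarith
  have k1 := key (a + t₀) (b + t₀)
  have k2 := key a b
  have k3 := key (a - t₀) (b - t₀)
  simp only [add_sub_add_right_eq_sub, sub_sub_sub_cancel_right] at k1 k3
  unfold psi'
  rw [show β * (max (a+t₀) 0 - 2*max a 0 + max (a-t₀) 0) -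
      β * (max (b+t₀) 0 - 2*max b 0 + max (b-t₀) 0)
      = β * (((max (a+t₀) 0 - max (b+t₀) 0) - 2*(max a 0 - max b 0))
        + (max (a-t₀) 0 - max (b-t₀) 0)) by ring]
  rw [abs_mul, abs_of_nonneg hβ]
  have := abs_add_le ((max (a+t₀) 0 - max (b+t₀) 0) - 2*(max a 0 - max b 0))
    (max (a-t₀) 0 - max (b-t₀) 0)
  have h2 : |(max (a+t₀) 0 - max (b+t₀) 0) - 2*(max a 0 - max b 0)|
      ≤ |max (a+t₀) 0 - max (b+t₀) 0| + 2 * |max a 0 - max b 0| := by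
    have := abs_sub (max (a+t₀) 0 - max (b+t₀) 0) (2*(max a 0 - max b 0))
    rw [abs_mul] at this
    simpa [abs_of_nonneg (by norm_num : (0:ℝ) ≤ 2)] using this
  have hsum : |(max (a+t₀) 0 - max (b+t₀) 0) - 2*(max a 0 - max b 0)
      + (max (a-t₀) 0 - max (b-t₀) 0)| ≤ 4 * |a - b| := by linarith
  calc β * |(max (a+t₀) 0 - max (b+t₀) 0) - 2*(max a 0 - max b 0)
      + (max (a-t₀) 0 - max (b-t₀) 0)|
      ≤ β * (4 * |a - b|) := mul_le_mul_of_nonneg_left hsum hβ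
    _ = 4 * β * |a - b| := by ring

lemma psi'_nonneg {β t₀ : ℝ} (hβ : 0 ≤ β) (ht : 0 ≤ t₀) (s : ℝ) : 0 ≤ psi' β t₀ s := by
  rw [psi'_eq β ht]; positivity

lemma psi'_le {β t₀ : ℝ} (hβ : 0 ≤ β) (ht : 0 ≤ t₀) (s : ℝ) : psi' β t₀ s ≤ β * t₀ := by
  rw [psi'_eq β ht]
  have : max (t₀ - |s|) 0 ≤ t₀ := max_le (by linarith [abs_nonneg s]) ht
  nlinarith

lemma psi'_zero {β t₀ : ℝ} (ht : 0 ≤ t₀) : psi' β t₀ 0 = β * t₀ := by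
  rw [psi'_eq β ht]; simp [max_eq_left ht]

lemma psi'_eq_zero {β t₀ : ℝ} (ht : 0 ≤ t₀) {s : ℝ} (h : t₀ ≤ |s|) : psi' β t₀ s = 0 := by
  rw [psi'_eq β ht, max_eq_right (by linarith)]; ring

lemma psi_zero {β t₀ : ℝ} (ht : 0 ≤ t₀) (hbt : β * t₀^2 = 1) : psi β t₀ 0 = 1 := by
  unfold psi qq
  rw [zero_add, zero_sub, max_eq_left ht, max_self, max_eq_right (neg_nonpos.mpr ht)]
  nlinarith

lemma psi_of_le_neg {β t₀ : ℝ} (ht : 0 ≤ t₀) {s : ℝ} (h : s ≤ -t₀) : psi β t₀ s = 1/2 := by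
  unfold psi qq
  rw [max_eq_right (show s + t₀ ≤ 0 by linarith), max_eq_right (show s ≤ 0 by linarith),
    max_eq_right (show s - t₀ ≤ 0 by linarith)]
  ring

lemma psi_of_ge {β t₀ : ℝ} (ht : 0 ≤ t₀) (hbt : β * t₀^2 = 1) {s : ℝ} (h : t₀ ≤ s) :
    psi β t₀ s = 3/2 := by
  unfold psi qq
  rw [max_eq_left (show (0:ℝ) ≤ s + t₀ by linarith), max_eq_left (show (0:ℝ) ≤ s by linarith),
    max_eq_left (show (0:ℝ) ≤ s - t₀ by linarith)]
  nlinarith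

lemma psi_mem {β t₀ : ℝ} (hβ : 0 ≤ β) (ht : 0 ≤ t₀) (hbt : β * t₀^2 = 1) {s : ℝ}
    (h : s ≤ 0) : psi β t₀ s ∈ Icc (1/2 : ℝ) 1 := by
  unfold psi qq
  rw [max_eq_right h, max_eq_right (show s - t₀ ≤ 0 by linarith)]
  have h1 : (0:ℝ) ≤ max (s + t₀) 0 := le_max_right _ _
  have h2 : max (s + t₀) 0 ≤ t₀ := max_le (by linarith) ht
  have h3 : max (s + t₀) 0 * max (s + t₀) 0 ≤ t₀ * t₀ := mul_self_le_mul_self h1 h2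
  have h4 : 0 ≤ β * (max (s+t₀) 0 ^ 2) := by positivity
  have h5 : β * (max (s+t₀) 0 ^ 2) ≤ β * t₀^2 := by nlinarith
  constructor
  · nlinarith
  · nlinarith

/-! ### Metric helpers -/

lemma le_infDist' {s : Set (En n)} (hs : s.Nonempty) {x : En n} {d : ℝ}
    (H : ∀ y ∈ s, d ≤ dist x y) : d ≤ infDist x s := by
  by_contra h
  push_neg at h
  obtain ⟨y, hy, hxy⟩ := (infDist_lt_iff hs).1 h
  exact absurd hxy (not_lt.2 (H y hy))

lemma sgnDist_lip (E : Set (En n)) (x y : En n) :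
    |sgnDist E x - sgnDist E y| ≤ 2 * dist x y := by
  have h1 := infDist_le_infDist_add_dist (s := E) (x := x) (y := y)
  have h2 := infDist_le_infDist_add_dist (s := E) (x := y) (y := x)
  have h3 := infDist_le_infDist_add_dist (s := Eᶜ) (x := x) (y := y)
  have h4 := infDist_le_infDist_add_dist (s := Eᶜ) (x := y) (y := x)
  rw [dist_comm y x] at h2 h4
  rw [abs_le]; unfold sgnDist; constructor <;> linarith

lemma infDist_le_of_ball_subset {c x : En n} {R : ℝ} {s : Set (En n)} (hR : 0 < R)
    (hsub : ball c R ⊆ s) (hx : R ≤ dist x c) : infDist x s ≤ dist x c - R := by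
  have hD : 0 < dist x c := lt_of_lt_of_le hR hx
  refine le_of_forall_pos_le_add fun ε hε => ?_
  rcases le_or_gt R ε with h | h
  · have : infDist x s ≤ dist x c := infDist_le_dist_of_mem (hsub (mem_ball_self hR))
    linarith
  · set D := dist x c with hDd
    set z := c + ((R - ε) / D) • (x - c) with hz
    have hxc : ‖x - c‖ = D := by rw [← dist_eq_norm]
    have hfrac : (0:ℝ) ≤ (R - ε) / D := div_nonneg (by linarith) hD.le
    have hfrac1 : (R - ε) / D ≤ 1 := by
      rw [div_le_one hD]; linarith
    have hzc : z ∈ ball c R := by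
      rw [mem_ball, dist_eq_norm, hz]
      have : c + ((R - ε) / D) • (x - c) - c = ((R - ε) / D) • (x - c) := by abel
      rw [this, norm_smul, Real.norm_eq_abs, abs_of_nonneg hfrac, hxc]
      rw [div_mul_cancel₀ _ hD.ne']
      linarith
    have hdist : dist x z = D - (R - ε) := by
      rw [dist_eq_norm, hz]
      have : x - (c + ((R - ε) / D) • (x - c)) = (1 - (R - ε) / D) • (x - c) := by
        rw [sub_smul, one_smul]; abel
      rw [this, norm_smul, Real.norm_eq_abs, abs_of_nonneg (by linarith), hxc]
      field_simp
    have := infDist_le_dist_of_mem (x := x) (hsub hzc)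
    rw [hdist] at this
    linarith

lemma le_infDist_compl_of_ball_subset {x : En n} {r : ℝ} {s : Set (En n)}
    (h : ball x r ⊆ s) (hs : sᶜ.Nonempty) : r ≤ infDist x sᶜ := by
  rcases le_or_gt r 0 with h0 | h0
  · exact h0.trans infDist_nonneg
  · refine le_infDist' hs fun y hy => not_lt.1 fun hlt => hy ?_
    exact h (by rwa [mem_ball, dist_comm])

lemma add_le_dist_of_balls {c c' : En n} {r r' : ℝ} {s : Set (En n)} (hr : 0 < r)
    (hr' : 0 < r') (h1 : ball c r ⊆ s) (h2 : ball c' r' ⊆ sᶜ) : r + r' ≤ dist c c' := by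
  by_contra hcon
  push_neg at hcon
  set D := dist c c' with hD
  have hD0 : 0 ≤ D := dist_nonneg
  rcases eq_or_lt_of_le hD0 with h0 | h0
  · have hc : c = c' := by
      rw [← dist_eq_zero, ← hD, ← h0]
    have m1 : c ∈ s := h1 (mem_ball_self hr)
    have m2 : c ∈ sᶜ := h2 (by rw [hc]; exact mem_ball_self hr')
    exact m2 m1
  · have hlt : max (D - r') 0 < min r D := by
      rw [max_lt_iff] at *
      constructor
      · rw [lt_min_iff]; constructor <;> linarith
      · rw [lt_min_iff]; exact ⟨hr, h0⟩
    set t := (max (D - r') 0 + min r D) / 2 with hts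
    have ht0 : 0 ≤ t := by
      have := le_max_right (D - r') 0
      have := lt_of_le_of_lt (le_max_right (D - r') 0) hlt
      rw [hts]; linarith
    have htr : t < r := by
      have h5 : t < min r D := by rw [hts]; linarith
      exact lt_of_lt_of_le h5 (min_le_left _ _)
    have htD : t ≤ D := by
      have h5 : t < min r D := by rw [hts]; linarith
      exact (lt_of_lt_of_le h5 (min_le_right _ _)).le
    have htr' : D - r' < t := by
      have h5 : max (D - r') 0 < t := by rw [hts]; linarith
      exact lt_of_le_of_lt (le_max_left _ _) h5
    have hcc : ‖c' - c‖ = D := by rw [← dist_eq_norm, dist_comm]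
    set z := c + (t / D) • (c' - c) with hz
    have hzc : dist z c = t := by
      rw [dist_eq_norm, hz]
      have : c + (t / D) • (c' - c) - c = (t / D) • (c' - c) := by abel
      rw [this, norm_smul, Real.norm_eq_abs, abs_of_nonneg (div_nonneg ht0 hD0), hcc]
      exact div_mul_cancel₀ _ h0.ne'
    have hzc' : dist z c' = D - t := by
      rw [dist_eq_norm, hz]
      have : c + (t / D) • (c' - c) - c' = (t / D - 1) • (c' - c) := by
        rw [sub_smul, one_smul]; abel
      rw [this, norm_smul, Real.norm_eq_abs, hcc, abs_of_nonpos (by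
        rw [sub_nonpos, div_le_one h0]; exact htD)]
      field_simp; ring
    have m1 : z ∈ s := h1 (by rw [mem_ball, hzc]; exact htr)
    have m2 : z ∈ sᶜ := h2 (by rw [mem_ball, hzc']; linarith)
    exact m2 m1

/-! ### The two-sided ball geometry -/

/-- Normal data at a point `x` near the boundary of `E`. -/
structure ND (R : ℝ) (E : Set (En n)) (x p ν : En n) : Prop where
  pmem : p ∈ frontier E
  unit : ‖ν‖ = 1
  rep : x = p + sgnDist E x • ν
  inb : ball (p - R • ν) R ⊆ E
  outb : ball (p + R • ν) R ⊆ Eᶜ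

lemma ND.dist_eq {R : ℝ} {E : Set (En n)} {x p ν : En n} (h : ND R E x p ν) :
    ‖x - p‖ = |sgnDist E x| := by
  have : x - p = sgnDist E x • ν := by nth_rewrite 1 [h.rep]; abel
  rw [this, norm_smul, Real.norm_eq_abs, h.unit, mul_one]

lemma sgnDist_eq_of_mem {E : Set (En n)} (hE : IsOpen E) {x : En n} (hx : x ∈ E) :
    sgnDist E x = -infDist x Eᶜ := by
  unfold sgnDist
  rw [infDist_zero_of_mem hx]
  ring

lemma sgnDist_eq_of_not_mem_closure {E : Set (En n)} {x : En n} (hx : x ∉ closure E) :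
    sgnDist E x = infDist x E := by
  unfold sgnDist
  rw [infDist_zero_of_mem (show x ∈ Eᶜ from fun h => hx (subset_closure h))]
  ring

lemma sgnDist_frontier {E : Set (En n)} (hE : IsOpen E) {x : En n} (hx : x ∈ frontier E) :
    sgnDist E x = 0 := by
  rw [hE.frontier_eq] at hx
  unfold sgnDist
  rw [← infDist_closure (s := E), infDist_zero_of_mem hx.1,
    infDist_zero_of_mem (show x ∈ Eᶜ from hx.2)]
  ring

/-- Uniqueness of the unit normal given an interior and an exterior tangent ball. -/
lemma normal_unique {E : Set (En n)} {x ν ν' : En n} {r r' : ℝ} (hr : 0 < r) (hr' : 0 < r')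
    (hν : ‖ν‖ = 1) (hν' : ‖ν'‖ = 1)
    (h1 : ball (x - r • ν) r ⊆ E) (h2 : ball (x + r' • ν') r' ⊆ Eᶜ) : ν = ν' := by
  have hd := add_le_dist_of_balls hr hr' h1 h2
  rw [dist_eq_norm] at hd
  have he : x - r • ν - (x + r' • ν') = -(r • ν + r' • ν') := by abel
  rw [he, norm_neg] at hd
  have hsq : (r + r')^2 ≤ ‖r • ν + r' • ν'‖^2 := by
    have h0 : (0:ℝ) ≤ r + r' := by linarith
    nlinarith [norm_nonneg (r • ν + r' • ν')]
  rw [norm_add_sq_real, norm_smul, norm_smul, Real.norm_eq_abs, Real.norm_eq_abs,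
    abs_of_pos hr, abs_of_pos hr', hν, hν', real_inner_smul_left, real_inner_smul_right] at hsq
  have hinner : 1 ≤ ⟪ν, ν'⟫ := by nlinarith [mul_pos hr hr']
  have hCS : ⟪ν, ν'⟫ ≤ 1 := by
    have := real_inner_le_norm ν ν'
    rwa [hν, hν', mul_one] at this
  have : ‖ν - ν'‖^2 = 0 := by
    rw [norm_sub_sq_real, hν, hν']
    nlinarith
  have := norm_eq_zero.1 (pow_eq_zero_iff (n := 2) (by norm_num) |>.1 this)
  exact sub_eq_zero.1 this

lemma exists_normal {R : ℝ} {E : Set (En n)} (hR : 0 < R)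
    (hUR : ∀ p ∈ frontier E, ∃ p' p'' : En n,
      dist p p' = R ∧ dist p p'' = R ∧ ball p' R ⊆ E ∧ ball p'' R ⊆ Eᶜ)
    {p : En n} (hp : p ∈ frontier E) :
    ∃ ν : En n, ‖ν‖ = 1 ∧ ball (p - R • ν) R ⊆ E ∧ ball (p + R • ν) R ⊆ Eᶜ := by
  obtain ⟨p', p'', h1, h2, h3, h4⟩ := hUR p hp
  have hdisj : (2:ℝ) * R ≤ dist p' p'' := by
    have := add_le_dist_of_balls hR hR h3 h4
    linarith
  have hnorm : ‖p - p'‖ = R := by rw [← dist_eq_norm]; exact h1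
  have hn2 : ‖p'' - p‖ = R := by rw [← dist_eq_norm, dist_comm]; exact h2
  set ν := R⁻¹ • (p - p') with hν
  have hνn : ‖ν‖ = 1 := by
    rw [hν, norm_smul, Real.norm_eq_abs, abs_of_pos (inv_pos.2 hR), hnorm]
    field_simp
  have hRν : R • ν = p - p' := by
    rw [hν, smul_smul, mul_inv_cancel₀ hR.ne', one_smul]
  have key : p'' - p = p - p' := by
    have e1 : ‖(p - p') + (p'' - p)‖ = dist p' p'' := by
      rw [dist_eq_norm, show p - p' + (p'' - p) = -(p' - p'') by abel, norm_neg]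
    have hge : 2*R ≤ ‖(p - p') + (p'' - p)‖ := by rw [e1]; exact hdisj
    have hs1 : ‖(p-p') + (p''-p)‖^2 = R^2 + 2*⟪p-p', p''-p⟫ + R^2 := by
      rw [norm_add_sq_real, hnorm, hn2]
    have hs2 : ‖(p-p') - (p''-p)‖^2 = R^2 - 2*⟪p-p', p''-p⟫ + R^2 := by
      rw [norm_sub_sq_real, hnorm, hn2]
    have hzero : ‖(p-p') - (p''-p)‖^2 ≤ 0 := by
      nlinarith [norm_nonneg ((p-p') + (p''-p))]
    have := norm_eq_zero.1 (pow_eq_zero_iff (n := 2) (by norm_num) |>.1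
      (le_antisymm hzero (sq_nonneg _)))
    exact (sub_eq_zero.1 this).symm
  refine ⟨ν, hνn, ?_, ?_⟩
  · have : p - R • ν = p' := by rw [hRν]; abel
    rw [this]; exact h3
  · have : p + R • ν = p'' := by rw [hRν, ← key]; abel
    rw [this]; exact h4

lemma sgnDist_compl (E : Set (En n)) (x : En n) : sgnDist Eᶜ x = -sgnDist E x := by
  unfold sgnDist
  rw [compl_compl]
  ring

lemma ND.compl {R : ℝ} {E : Set (En n)} {x p ν : En n} (h : ND R E x p ν) :
    ND R Eᶜ x p (-ν) where
  pmem := by rw [frontier_compl]; exact h.pmem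
  unit := by rw [norm_neg]; exact h.unit
  rep := by
    rw [sgnDist_compl, neg_smul, smul_neg, neg_neg]
    exact h.rep
  inb := by
    rw [smul_neg, sub_neg_eq_add]
    exact h.outb
  outb := by
    rw [smul_neg, ← sub_eq_add_neg, compl_compl]
    exact h.inb

lemma sgnDist_le_ub {R : ℝ} {E : Set (En n)} {x p ν : En n} (h : ND R E x p ν)
    (hR : 0 < R) (hEc : Eᶜ.Nonempty) (y : En n) :
    sgnDist E y ≤ dist y (p - R • ν) - R := by
  set c := p - R • ν with hc
  rcases le_or_gt R (dist y c) with hd | hd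
  · have h1 : infDist y E ≤ dist y c - R := infDist_le_of_ball_subset hR h.inb hd
    have h2 : 0 ≤ infDist y Eᶜ := infDist_nonneg
    unfold sgnDist; linarith
  · have hyE : y ∈ E := h.inb (mem_ball.2 hd)
    have h1 : infDist y E = 0 := infDist_zero_of_mem hyE
    have hb : ball y (R - dist y c) ⊆ E :=
      subset_trans (ball_subset_ball' (by rw [dist_comm]; linarith)) h.inb
    have h2 : R - dist y c ≤ infDist y Eᶜ := le_infDist_compl_of_ball_subset hb hEc
    unfold sgnDist; linarith

lemma sgnDist_ge_lb {R : ℝ} {E : Set (En n)} {x p ν : En n} (h : ND R E x p ν)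
    (hR : 0 < R) (hEne : E.Nonempty) (y : En n) :
    R - dist y (p + R • ν) ≤ sgnDist E y := by
  have := sgnDist_le_ub h.compl hR (by rwa [compl_compl]) y
  rw [sgnDist_compl, smul_neg, sub_neg_eq_add] at this
  linarith

/-- Squeeze theorem for gradients. -/
lemma hasGradientAt_squeeze {f g h : En n → ℝ} {D x} (hf : HasGradientAt f D x)
    (hg : HasGradientAt g D x) (hgh : ∀ y, g y ≤ h y) (hhf : ∀ y, h y ≤ f y)
    (hfx : f x = h x) (hgx : g x = h x) : HasGradientAt h D x := by
  rw [hasGradientAt_iff_isLittleO] at hf hg ⊢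
  rw [Asymptotics.isLittleO_iff] at hf hg ⊢
  intro c hc
  filter_upwards [hf (half_pos hc), hg (half_pos hc)] with y h1 h2
  rw [Real.norm_eq_abs] at h1 h2 ⊢
  have e1 : h y - h x - ⟪D, y - x⟫ ≤ f y - f x - ⟪D, y - x⟫ := by
    have := hhf y; linarith [hfx.ge, hfx.le]
  have e2 : g y - g x - ⟪D, y - x⟫ ≤ h y - h x - ⟪D, y - x⟫ := by
    have := hgh y; linarith
  rw [abs_le]
  cases' abs_le.1 h1 with h1a h1b
  cases' abs_le.1 h2 with h2a h2b
  have hnn : 0 ≤ ‖y - x‖ := norm_nonneg _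
  constructor
  · have : -(c/2 * ‖y - x‖) ≤ g y - g x - ⟪D, y - x⟫ := h2a
    rw [hgx] at this
    nlinarith
  · have : f y - f x - ⟪D, y - x⟫ ≤ c/2 * ‖y - x‖ := h1b
    rw [hfx] at this
    nlinarith

lemma hasGradientAt_dist_right {c x : En n} (h : x ≠ c) :
    HasGradientAt (fun y => dist y c) (‖x - c‖⁻¹ • (x - c)) x := by
  have hne : ‖x - c‖ ≠ 0 := by
    simp only [ne_eq, norm_eq_zero, sub_eq_zero]
    exact h
  have h1 : HasFDerivAt (fun y : En n => ‖y - c‖^2)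
      (2 • ((innerSL ℝ (x - c)).comp (ContinuousLinearMap.id ℝ (En n)))) x := by
    simpa using ((hasFDerivAt_id x).sub_const c).norm_sq
  have hsq : Real.sqrt (‖x - c‖^2) = ‖x - c‖ := Real.sqrt_sq (norm_nonneg _)
  have h2 : HasDerivAt Real.sqrt (1/(2 * Real.sqrt (‖x - c‖^2))) (‖x - c‖^2) :=
    Real.hasDerivAt_sqrt (pow_ne_zero 2 hne)
  have h3 := h2.comp_hasFDerivAt x h1
  have heq : (Real.sqrt ∘ fun y : En n => ‖y - c‖^2) = fun y => dist y c := by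
    funext y
    simp [Function.comp, Real.sqrt_sq (norm_nonneg _), dist_eq_norm]
  rw [heq] at h3
  rw [hasGradientAt_iff_hasFDerivAt]
  refine h3.congr_fderiv (Eq.symm ?_)
  ext w
  simp only [InnerProductSpace.toDual_apply_apply, ContinuousLinearMap.coe_smul',
    Pi.smul_apply, ContinuousLinearMap.coe_comp', Function.comp_apply,
    ContinuousLinearMap.coe_id', id_eq, innerSL_apply_apply, smul_eq_mul, hsq]
  rw [real_inner_smul_left, real_inner_comm]
  field_simp
  try ring

lemma ND.hasGradientAt_sgnDist {R : ℝ} {E : Set (En n)} {x p ν : En n}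
    (h : ND R E x p ν) (hR : 0 < R) (hx : |sgnDist E x| < R)
    (hEne : E.Nonempty) (hEc : Eᶜ.Nonempty) :
    HasGradientAt (sgnDist E) ν x := by
  set dx := sgnDist E x with hdx
  have habs := abs_lt.1 hx
  set c := p - R • ν with hcdef
  set e := p + R • ν with hedef
  have hxc : x - c = (R + dx) • ν := by
    rw [hcdef]
    nth_rewrite 1 [h.rep]
    rw [add_smul]
    abel
  have hxe : x - e = (dx - R) • ν := by
    rw [hedef]
    nth_rewrite 1 [h.rep]
    rw [sub_smul]
    abel
  have hnc : ‖x - c‖ = R + dx := by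
    rw [hxc, norm_smul, Real.norm_eq_abs, h.unit, mul_one, abs_of_pos (by linarith)]
  have hne' : ‖x - e‖ = R - dx := by
    rw [hxe, norm_smul, Real.norm_eq_abs, h.unit, mul_one, abs_of_neg (by linarith)]
    ring
  have hxcne : x ≠ c := by
    intro hh
    rw [hh, sub_self] at hnc
    simp at hnc
    linarith
  have hxene : x ≠ e := by
    intro hh
    rw [hh, sub_self] at hne'
    simp at hne'
    linarith
  have hf : HasGradientAt (fun y => dist y c - R) ν x := by
    have h0 := hasGradientAt_dist_right hxcne
    have hval : ‖x - c‖⁻¹ • (x - c) = ν := by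
      rw [hxc, norm_smul, Real.norm_eq_abs, h.unit, mul_one,
        abs_of_pos (show (0:ℝ) < R + dx by linarith), smul_smul,
        inv_mul_cancel₀ (show R + dx ≠ 0 by linarith), one_smul]
    rw [hval] at h0
    rw [hasGradientAt_iff_hasFDerivAt] at h0 ⊢
    exact h0.sub_const R
  have hg : HasGradientAt (fun y => R - dist y e) ν x := by
    have h0 := hasGradientAt_dist_right hxene
    have hval : ‖x - e‖⁻¹ • (x - e) = -ν := by
      rw [hne', hxe, smul_smul,
        show (R - dx)⁻¹ * (dx - R) = -1 by
          rw [show dx - R = -(R - dx) by ring, mul_neg,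
            inv_mul_cancel₀ (show R - dx ≠ 0 by linarith)],
        neg_one_smul]
    rw [hval] at h0
    rw [hasGradientAt_iff_hasFDerivAt] at h0 ⊢
    have := h0.const_sub R
    simpa [map_neg, neg_neg] using this
  refine hasGradientAt_squeeze hf hg (sgnDist_ge_lb h hR hEne) (sgnDist_le_ub h hR hEc) ?_ ?_
  · rw [← dist_eq_norm] at hnc
    rw [hnc]; ring
  · rw [← dist_eq_norm] at hne'
    rw [hne']; ring

lemma exists_ND {R : ℝ} {E : Set (En n)} (hR : 0 < R) (hE : IsOpen E)
    (hUR : ∀ p ∈ frontier E, ∃ p' p'' : En n,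
      dist p p' = R ∧ dist p p'' = R ∧ ball p' R ⊆ E ∧ ball p'' R ⊆ Eᶜ)
    (hne : (frontier E).Nonempty) {x : En n} (hx : |sgnDist E x| < R) :
    ∃ p ν, ND R E x p ν := by
  have hEne : E.Nonempty := by
    rcases E.eq_empty_or_nonempty with h | h
    · exfalso; rw [h] at hne; simp at hne
    · exact h
  have hEc : Eᶜ.Nonempty := by
    rcases Eᶜ.eq_empty_or_nonempty with h | h
    · exfalso
      rw [compl_empty_iff] at h
      rw [h] at hne
      simp at hne
    · exact h
  by_cases hxE : x ∈ E
  · -- interior case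
    have hd : sgnDist E x = -infDist x Eᶜ := sgnDist_eq_of_mem hE hxE
    set u := infDist x Eᶜ with hu
    obtain ⟨ε, hε, hball⟩ := Metric.isOpen_iff.1 hE x hxE
    have hupos : 0 < u := lt_of_lt_of_le hε (le_infDist_compl_of_ball_subset hball hEc)
    have huR : u < R := by
      rw [hd] at hx
      rwa [abs_neg, abs_of_pos hupos] at hx
    obtain ⟨q, hqc, hq⟩ := (hE.isClosed_compl).exists_infDist_eq_dist hEc x
    rw [← hu] at hq
    have hqfr : q ∈ frontier E := by
      rw [hE.frontier_eq]
      refine ⟨?_, hqc⟩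
      have h1 : q ∈ closedBall x u := by
        rw [mem_closedBall, dist_comm]; exact hq.ge
      rw [← closure_ball x hupos.ne'] at h1
      exact closure_mono ball_infDist_compl_subset h1
    obtain ⟨ν, hν1, hin, hout⟩ := exists_normal hR hUR hqfr
    have hxq : ‖x - q‖ = u := by rw [← dist_eq_norm, ← hq]
    have hnotin : x ∉ ball (q + R • ν) R := fun hmem => (hout hmem) hxE
    have hdge : R ≤ dist x (q + R • ν) := not_lt.1 (fun hlt => hnotin (mem_ball.2 hlt))
    have hkey : u + R ≤ ‖x - q - R • ν‖ := by
      have h5 := infDist_le_of_ball_subset hR hout hdge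
      rw [← hu] at h5
      have h6 : dist x (q + R • ν) = ‖x - q - R • ν‖ := by
        rw [dist_eq_norm]; congr 1; abel
      rw [h6] at h5
      linarith
    have hRν : ‖R • ν‖ = R := by
      rw [norm_smul, Real.norm_eq_abs, abs_of_pos hR, hν1, mul_one]
    have hip : ⟪x - q, ν⟫ ≤ -u := by
      have hsq : (u + R)^2 ≤ ‖x - q - R • ν‖^2 := by
        nlinarith [norm_nonneg (x - q - R • ν)]
      rw [norm_sub_sq_real, hxq, hRν, real_inner_smul_right] at hsq
      nlinarith
    have hlow : -u ≤ ⟪x - q, ν⟫ := by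
      have := abs_real_inner_le_norm (x - q) ν
      rw [hxq, hν1, mul_one] at this
      linarith [abs_le.1 this]
    have hipe : ⟪x - q, ν⟫ = -u := le_antisymm hip hlow
    have hrep : x - q = (-u) • ν := by
      have hz : ‖x - q + u • ν‖^2 = 0 := by
        rw [norm_add_sq_real, hxq, norm_smul, Real.norm_eq_abs, abs_of_pos hupos,
          hν1, mul_one, real_inner_smul_right, hipe]
        ring
      have := norm_eq_zero.1 (pow_eq_zero_iff (n := 2) (by norm_num) |>.1 hz)
      rw [neg_smul]
      rw [add_eq_zero_iff_eq_neg] at this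
      exact this
    refine ⟨q, ν, ⟨hqfr, hν1, ?_, hin, hout⟩⟩
    rw [hd]
    nth_rewrite 1 [show x = q + (x - q) by abel]
    rw [hrep]
  by_cases hxcl : x ∈ closure E
  · -- boundary case
    have hxfr : x ∈ frontier E := by rw [hE.frontier_eq]; exact ⟨hxcl, hxE⟩
    obtain ⟨ν, hν1, hin, hout⟩ := exists_normal hR hUR hxfr
    refine ⟨x, ν, ⟨hxfr, hν1, ?_, hin, hout⟩⟩
    rw [sgnDist_frontier hE hxfr]
    simp
  · -- exterior case
    have hd : sgnDist E x = infDist x E := sgnDist_eq_of_not_mem_closure hxcl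
    set u := infDist x E with hu
    obtain ⟨ε, hε, hball⟩ := Metric.isOpen_iff.1 (isOpen_compl_iff.2 isClosed_closure) x hxcl
    have hupos : 0 < u := by
      refine lt_of_lt_of_le hε (le_infDist' hEne fun y hy => ?_)
      by_contra hlt
      push_neg at hlt
      exact (hball (mem_ball'.2 hlt)) (subset_closure hy)
    have huR : u < R := by rwa [hd, abs_of_pos hupos] at hx
    obtain ⟨q, hqcl, hq⟩ := isClosed_closure.exists_infDist_eq_dist
      (hEne.mono subset_closure) x
    rw [infDist_closure, ← hu] at hq
    have hxq : ‖x - q‖ = u := by rw [← dist_eq_norm, ← hq]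
    have hqE : q ∉ E := by
      intro hqE
      obtain ⟨ε', hε', hball'⟩ := Metric.isOpen_iff.1 hE q hqE
      set t := min (ε' / (2 * u)) (1/2) with ht
      have ht0 : 0 < t := lt_min (by positivity) (by norm_num)
      have ht1 : t ≤ 1/2 := min_le_right _ _
      set z := q + t • (x - q) with hz
      have hzq : dist z q = t * u := by
        rw [dist_eq_norm, show q + t • (x - q) - q = t • (x - q) by abel, norm_smul,
          Real.norm_eq_abs, abs_of_pos ht0, hxq]
      have hzE : z ∈ E := by
        apply hball'
        rw [mem_ball, hzq]
        calc t * u ≤ ε' / (2 * u) * u := by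
              apply mul_le_mul_of_nonneg_right (min_le_left _ _) hupos.le
          _ = ε' / 2 := by field_simp
          _ < ε' := by linarith
      have hxz : dist x z = (1 - t) * u := by
        rw [dist_eq_norm, show x - (q + t • (x - q)) = (1 - t) • (x - q) by
          rw [sub_smul, one_smul]; abel, norm_smul, Real.norm_eq_abs,
          abs_of_pos (by linarith : (0:ℝ) < 1 - t), hxq]
      have := infDist_le_dist_of_mem (x := x) hzE
      rw [← hu, hxz] at this
      nlinarith
    have hqfr : q ∈ frontier E := by rw [hE.frontier_eq]; exact ⟨hqcl, hqE⟩
    obtain ⟨ν, hν1, hin, hout⟩ := exists_normal hR hUR hqfr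
    have hnotin : x ∉ ball (q - R • ν) R := fun hmem => hxcl (subset_closure (hin hmem))
    have hdge : R ≤ dist x (q - R • ν) := not_lt.1 (fun hlt => hnotin (mem_ball.2 hlt))
    have hkey : u + R ≤ ‖x - q + R • ν‖ := by
      have := infDist_le_of_ball_subset hR hin hdge
      rw [← hu] at this
      rw [show x - q + R • ν = x - (q - R • ν) by abel, ← dist_eq_norm]
      linarith
    have hRν : ‖R • ν‖ = R := by
      rw [norm_smul, Real.norm_eq_abs, abs_of_pos hR, hν1, mul_one]
    have hip : u ≤ ⟪x - q, ν⟫ := by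
      have hsq : (u + R)^2 ≤ ‖x - q + R • ν‖^2 := by
        nlinarith [norm_nonneg (x - q + R • ν)]
      rw [norm_add_sq_real, hxq, hRν, real_inner_smul_right] at hsq
      nlinarith
    have hhigh : ⟪x - q, ν⟫ ≤ u := by
      have := abs_real_inner_le_norm (x - q) ν
      rw [hxq, hν1, mul_one] at this
      linarith [abs_le.1 this]
    have hipe : ⟪x - q, ν⟫ = u := le_antisymm hhigh hip
    have hrep : x - q = u • ν := by
      have hz : ‖x - q - u • ν‖^2 = 0 := by
        rw [norm_sub_sq_real, hxq, norm_smul, Real.norm_eq_abs, abs_of_pos hupos,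
          hν1, mul_one, real_inner_smul_right, hipe]
        ring
      have := norm_eq_zero.1 (pow_eq_zero_iff (n := 2) (by norm_num) |>.1 hz)
      exact sub_eq_zero.1 this
    refine ⟨q, ν, ⟨hqfr, hν1, ?_, hin, hout⟩⟩
    rw [hd]
    nth_rewrite 1 [show x = q + (x - q) by abel]
    rw [hrep]

lemma nonempty_pair {E : Set (En n)} (hne : (frontier E).Nonempty) :
    E.Nonempty ∧ Eᶜ.Nonempty := by
  constructor
  · rcases E.eq_empty_or_nonempty with h | h
    · exfalso; rw [h] at hne; simp at hne
    · exact h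
  · rcases Eᶜ.eq_empty_or_nonempty with h | h
    · exfalso
      rw [compl_empty_iff] at h
      rw [h] at hne
      simp at hne
    · exact h

lemma ND.inner_est {R : ℝ} {E : Set (En n)} {x p ν q : En n} (h : ND R E x p ν)
    (hE : IsOpen E) (hR : 0 < R) (hq : q ∈ frontier E) :
    2*R*|⟪ν, q - p⟫| ≤ ‖q - p‖^2 := by
  have hqE : q ∉ E := by rw [hE.frontier_eq] at hq; exact hq.2
  have hqcl : q ∈ closure E := frontier_subset_closure hq
  have hq1 : q ∉ ball (p - R • ν) R := fun hm => hqE (h.inb hm)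
  have hq2 : q ∉ ball (p + R • ν) R := by
    intro hm
    obtain ⟨z, hz1, hz2⟩ := mem_closure_iff.1 hqcl _ isOpen_ball hm
    exact (h.outb hz1) hz2
  have d1 : R ≤ ‖q - p + R • ν‖ := by
    have := not_lt.1 (fun hlt => hq1 (mem_ball.2 hlt))
    rw [dist_eq_norm, show q - (p - R • ν) = q - p + R • ν by abel] at this
    exact this
  have d2 : R ≤ ‖q - p - R • ν‖ := by
    have := not_lt.1 (fun hlt => hq2 (mem_ball.2 hlt))
    rw [dist_eq_norm, show q - (p + R • ν) = q - p - R • ν by abel] at this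
    exact this
  have hRν : ‖R • ν‖ = R := by
    rw [norm_smul, Real.norm_eq_abs, abs_of_pos hR, h.unit, mul_one]
  have s1 : R^2 ≤ ‖q - p‖^2 + 2*R*⟪q - p, ν⟫ + R^2 := by
    have := norm_add_sq_real (q - p) (R • ν)
    rw [hRν, real_inner_smul_right] at this
    nlinarith [norm_nonneg (q - p + R • ν)]
  have s2 : R^2 ≤ ‖q - p‖^2 - 2*R*⟪q - p, ν⟫ + R^2 := by
    have := norm_sub_sq_real (q - p) (R • ν)
    rw [hRν, real_inner_smul_right] at this
    nlinarith [norm_nonneg (q - p - R • ν)]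
  have hcm : ⟪ν, q - p⟫ = ⟪q - p, ν⟫ := real_inner_comm _ _
  rw [hcm]
  have habs : |2*R*⟪q - p, ν⟫| ≤ ‖q - p‖^2 := abs_le.2 ⟨by linarith, by linarith⟩
  calc 2*R*|⟪q - p, ν⟫| = |2*R*⟪q - p, ν⟫| := by
        rw [abs_mul, abs_of_pos (show (0:ℝ) < 2*R by linarith)]
    _ ≤ ‖q - p‖^2 := habs

lemma ND.proj_est {R : ℝ} {E : Set (En n)} (hE : IsOpen E) (hR : 0 < R)
    {x y p p' ν ν' : En n} (hx : ND R E x p ν) (hy : ND R E y p' ν')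
    (h1 : |sgnDist E x| ≤ R/2) (h2 : |sgnDist E y| ≤ R/2) :
    ‖p' - p‖ ≤ 2 * dist x y := by
  set a := p' - p with ha
  have e1 : ⟪x - p, a⟫ ≤ ‖a‖^2/4 := by
    have hxp : x - p = sgnDist E x • ν := by nth_rewrite 1 [hx.rep]; abel
    rw [hxp, real_inner_smul_left]
    have hie := hx.inner_est hE hR hy.pmem
    rw [← ha] at hie
    have k1 : sgnDist E x * ⟪ν, a⟫ ≤ |sgnDist E x| * |⟪ν, a⟫| := by
      calc sgnDist E x * ⟪ν, a⟫ ≤ |sgnDist E x * ⟪ν, a⟫| := le_abs_self _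
        _ = |sgnDist E x| * |⟪ν, a⟫| := abs_mul _ _
    have k2 : |sgnDist E x| * |⟪ν, a⟫| ≤ (R/2) * |⟪ν, a⟫| :=
      mul_le_mul_of_nonneg_right h1 (abs_nonneg _)
    linarith
  have e2 : ⟪p' - y, a⟫ ≤ ‖a‖^2/4 := by
    have hyp : y - p' = sgnDist E y • ν' := by nth_rewrite 1 [hy.rep]; abel
    have hyp' : p' - y = (-sgnDist E y) • ν' := by
      rw [neg_smul, ← hyp]; abel
    rw [hyp', real_inner_smul_left]
    have hie := hy.inner_est hE hR hx.pmem
    have hna : ‖p - p'‖ = ‖a‖ := by rw [ha, norm_sub_rev]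
    have hinner : ⟪ν', p - p'⟫ = -⟪ν', a⟫ := by
      rw [ha, show p - p' = -(p' - p) by abel, inner_neg_right]
    rw [hna, hinner, abs_neg] at hie
    have k1 : (-sgnDist E y) * ⟪ν', a⟫ ≤ |sgnDist E y| * |⟪ν', a⟫| := by
      calc (-sgnDist E y) * ⟪ν', a⟫ ≤ |(-sgnDist E y) * ⟪ν', a⟫| := le_abs_self _
        _ = |sgnDist E y| * |⟪ν', a⟫| := by rw [abs_mul, abs_neg]
    have k2 : |sgnDist E y| * |⟪ν', a⟫| ≤ (R/2) * |⟪ν', a⟫| :=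
      mul_le_mul_of_nonneg_right h2 (abs_nonneg _)
    linarith
  have hdecomp : ‖a‖^2 = ⟪p' - y, a⟫ + ⟪y - x, a⟫ + ⟪x - p, a⟫ := by
    have hsum : (p' - y) + (y - x) + (x - p) = a := by rw [ha]; abel
    rw [← real_inner_self_eq_norm_sq]
    nth_rewrite 1 [← hsum]
    rw [inner_add_left, inner_add_left]
  have e3 : ⟪y - x, a⟫ ≤ dist x y * ‖a‖ := by
    have k1 := real_inner_le_norm (y - x) a
    have k2 : ‖y - x‖ = dist x y := by rw [dist_eq_norm, norm_sub_rev]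
    rw [k2] at k1
    exact k1
  have hdn : (0:ℝ) ≤ dist x y := dist_nonneg
  nlinarith [norm_nonneg a, hdn, sq_nonneg (‖a‖ - 2 * dist x y)]

lemma ND.normal_est {R : ℝ} {E : Set (En n)} (hE : IsOpen E) (hR : 0 < R)
    {x y p p' ν ν' : En n} (hx : ND R E x p ν) (hy : ND R E y p' ν') :
    R * ‖ν - ν'‖ ≤ 2 * ‖p' - p‖ := by
  set a := p' - p with ha
  have hd := add_le_dist_of_balls hR hR hy.inb hx.outb
  rw [dist_eq_norm, show p' - R • ν' - (p + R • ν) = a - R • (ν + ν') by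
    rw [ha, smul_add]; abel] at hd
  have hsq : (2*R)^2 ≤ ‖a - R • (ν + ν')‖^2 := by
    nlinarith [norm_nonneg (a - R • (ν + ν'))]
  have hRν : ‖R • (ν + ν')‖^2 = R^2 * ‖ν + ν'‖^2 := by
    rw [norm_smul, Real.norm_eq_abs, abs_of_pos hR, mul_pow]
  rw [norm_sub_sq_real, hRν, real_inner_smul_right] at hsq
  have hpar : ‖ν + ν'‖^2 + ‖ν - ν'‖^2 = 4 := by
    rw [norm_add_sq_real, norm_sub_sq_real, hx.unit, hy.unit]
    ring
  have hi1 : 2*R*|⟪ν, a⟫| ≤ ‖a‖^2 := by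
    have := hx.inner_est hE hR hy.pmem
    rwa [← ha] at this
  have hi2 : 2*R*|⟪ν', a⟫| ≤ ‖a‖^2 := by
    have := hy.inner_est hE hR hx.pmem
    have hna : ‖p - p'‖ = ‖a‖ := by rw [ha, norm_sub_rev]
    have hinner : ⟪ν', p - p'⟫ = -⟪ν', a⟫ := by
      rw [ha, show p - p' = -(p' - p) by abel, inner_neg_right]
    rwa [hna, hinner, abs_neg] at this
  have hadd : ⟪a, ν + ν'⟫ = ⟪a, ν⟫ + ⟪a, ν'⟫ := inner_add_right a ν ν'
  have c1 : ⟪a, ν⟫ = ⟪ν, a⟫ := real_inner_comm _ _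
  have c2 : ⟪a, ν'⟫ = ⟪ν', a⟫ := real_inner_comm _ _
  rw [hadd, c1, c2] at hsq
  have h44 : ‖ν + ν'‖^2 = 4 - ‖ν - ν'‖^2 := by linarith
  rw [h44] at hsq
  have hmul1 := mul_le_mul_of_nonneg_left (neg_abs_le (⟪ν, a⟫ : ℝ))
    (show (0:ℝ) ≤ 2*R by linarith)
  have hmul2 := mul_le_mul_of_nonneg_left (neg_abs_le (⟪ν', a⟫ : ℝ))
    (show (0:ℝ) ≤ 2*R by linarith)
  have j1 : -(‖a‖^2) ≤ 2*R*⟪ν, a⟫ := by nlinarith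
  have j2 : -(‖a‖^2) ≤ 2*R*⟪ν', a⟫ := by nlinarith
  have hkey : R^2 * ‖ν - ν'‖^2 ≤ 3 * ‖a‖^2 := by nlinarith
  nlinarith [mul_nonneg hR.le (norm_nonneg (ν - ν')), norm_nonneg a,
    norm_nonneg (ν - ν'), sq_nonneg (R * ‖ν - ν'‖ - 2 * ‖a‖),
    sq_nonneg (R * ‖ν - ν'‖ + 2 * ‖a‖)]

/-! ### The master function -/

/-- The length scale `t₀ = β^{-1/2}`. -/
def t0 (β : ℝ) : ℝ := (Real.sqrt β)⁻¹

/-- The function `z = ψ(σ ⬝ sgnDist E)`. -/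
def zfun (β σ : ℝ) (E : Set (En n)) : En n → ℝ :=
  fun x => psi β (t0 β) (σ * sgnDist E x)

section Master

variable {R β σ : ℝ} {E : Set (En n)}

lemma beta_pos (hR : 0 < R) (hβ : 4 / R^2 ≤ β) : 0 < β :=
  lt_of_lt_of_le (by positivity) hβ

lemma sqrt_beta_ge (hR : 0 < R) (hβ : 4 / R^2 ≤ β) : 2/R ≤ Real.sqrt β := by
  rw [show (2:ℝ)/R = Real.sqrt ((2/R)^2) by rw [Real.sqrt_sq (by positivity)]]
  apply Real.sqrt_le_sqrt
  rw [div_pow]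
  norm_num
  exact hβ

lemma t0_pos (hR : 0 < R) (hβ : 4 / R^2 ≤ β) : 0 < t0 β :=
  inv_pos.2 (Real.sqrt_pos.2 (beta_pos hR hβ))

lemma t0_le (hR : 0 < R) (hβ : 4 / R^2 ≤ β) : t0 β ≤ R/2 := by
  have h1 := sqrt_beta_ge hR hβ
  have h2 : (0:ℝ) < 2/R := by positivity
  have := one_div_le_one_div_of_le h2 h1
  rw [one_div_div] at this
  rw [t0, ← one_div]
  linarith

lemma beta_t0_sq (hR : 0 < R) (hβ : 4 / R^2 ≤ β) : β * t0 β^2 = 1 := by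
  have hb := beta_pos hR hβ
  rw [t0, inv_pow, ← Real.sqrt_sq hb.le]
  rw [Real.sqrt_sq hb.le, Real.sq_sqrt hb.le]
  exact mul_inv_cancel₀ hb.ne'

lemma beta_t0 (hR : 0 < R) (hβ : 4 / R^2 ≤ β) : β * t0 β = Real.sqrt β := by
  have hb := beta_pos hR hβ
  have hs : Real.sqrt β ≠ 0 := (Real.sqrt_pos.2 hb).ne'
  rw [t0]
  field_simp; rw [Real.sq_sqrt hb.le]

lemma grad_spec (hR : 0 < R) (hE : IsOpen E)
    (hUR : ∀ p ∈ frontier E, ∃ p' p'' : En n,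
      dist p p' = R ∧ dist p p'' = R ∧ ball p' R ⊆ E ∧ ball p'' R ⊆ Eᶜ)
    (hne : (frontier E).Nonempty) (hβ : 4 / R^2 ≤ β) (hσ : |σ| = 1) (x : En n) :
    ∃ g, HasGradientAt (zfun β σ E) g x ∧ gradient (zfun β σ E) x = g ∧
      ‖g‖ = β * max (t0 β - |sgnDist E x|) 0 ∧
      (|sgnDist E x| < R → ∃ p ν, ND R E x p ν ∧
        g = (σ * psi' β (t0 β) (σ * sgnDist E x)) • ν) := by
  have hb := beta_pos hR hβ
  have ht0 := t0_pos hR hβ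
  have ht0R : t0 β < R := lt_of_le_of_lt (t0_le hR hβ) (by linarith)
  obtain ⟨hEne, hEc⟩ := nonempty_pair hne
  by_cases hxR : |sgnDist E x| < R
  · obtain ⟨p, ν, hND⟩ := exists_ND hR hE hUR hne hxR
    have hgrad := hND.hasGradientAt_sgnDist hR hxR hEne hEc
    have hFD : HasFDerivAt (sgnDist E) ((InnerProductSpace.toDual ℝ (En n)) ν) x :=
      hasGradientAt_iff_hasFDerivAt.1 hgrad
    have hmul : HasFDerivAt (fun y => σ * sgnDist E y)
        (σ • ((InnerProductSpace.toDual ℝ (En n)) ν)) x := hFD.const_mul σ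
    have hψ := hasDerivAt_psi β (t0 β) (σ * sgnDist E x)
    have hcomp := hψ.comp_hasFDerivAt x hmul
    have hzg : HasGradientAt (zfun β σ E)
        ((σ * psi' β (t0 β) (σ * sgnDist E x)) • ν) x := by
      rw [hasGradientAt_iff_hasFDerivAt]
      have heq : (InnerProductSpace.toDual ℝ (En n))
          ((σ * psi' β (t0 β) (σ * sgnDist E x)) • ν)
          = psi' β (t0 β) (σ * sgnDist E x) •
            (σ • ((InnerProductSpace.toDual ℝ (En n)) ν)) := by
        ext w
        simp only [InnerProductSpace.toDual_apply_apply, ContinuousLinearMap.coe_smul',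
          Pi.smul_apply, smul_eq_mul]
        rw [real_inner_smul_left]
        ring
      rw [heq]
      exact hcomp
    refine ⟨_, hzg, hzg.gradient, ?_, fun _ => ⟨p, ν, hND, rfl⟩⟩
    rw [norm_smul, Real.norm_eq_abs, hND.unit, mul_one, abs_mul, hσ, one_mul,
      abs_of_nonneg (psi'_nonneg hb.le ht0.le _), psi'_eq β ht0.le, abs_mul, hσ, one_mul]
  · push_neg at hxR
    have hr2 : (0:ℝ) < (R - t0 β)/2 := by linarith
    have hev : zfun β σ E =ᶠ[𝓝 x] fun _ => zfun β σ E x := by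
      filter_upwards [Metric.ball_mem_nhds x hr2] with y hy
      rw [mem_ball] at hy
      have hdd : |sgnDist E y - sgnDist E x| ≤ 2 * dist y x := sgnDist_lip E y x
      rcases le_total 0 (σ * sgnDist E x) with hs | hs
      · have hx1 : σ * sgnDist E x ≥ R := by
          have : |σ * sgnDist E x| = |sgnDist E x| := by rw [abs_mul, hσ, one_mul]
          rw [abs_of_nonneg hs] at this
          linarith
        have hy1 : σ * sgnDist E y ≥ t0 β := by
          have : |σ * sgnDist E y - σ * sgnDist E x| ≤ 2 * dist y x := by
            rw [← mul_sub, abs_mul, hσ, one_mul]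
            exact hdd
          have := (abs_le.1 this).1
          rw [dist_comm] at hy
          rw [dist_comm] at this
          linarith [hy]
        have hx2 : t0 β ≤ σ * sgnDist E x := by linarith
        show psi β (t0 β) (σ * sgnDist E y) = psi β (t0 β) (σ * sgnDist E x)
        rw [psi_of_ge ht0.le (beta_t0_sq hR hβ) hy1, psi_of_ge ht0.le (beta_t0_sq hR hβ) hx2]
      · have hx1 : σ * sgnDist E x ≤ -R := by
          have : |σ * sgnDist E x| = |sgnDist E x| := by rw [abs_mul, hσ, one_mul]
          rw [abs_of_nonpos hs] at this
          linarith
        have hy1 : σ * sgnDist E y ≤ -(t0 β) := by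
          have h5 : |σ * sgnDist E y - σ * sgnDist E x| ≤ 2 * dist y x := by
            rw [← mul_sub, abs_mul, hσ, one_mul]
            exact hdd
          have := (abs_le.1 h5).2
          linarith [hy]
        have hx2 : σ * sgnDist E x ≤ -(t0 β) := by linarith
        show psi β (t0 β) (σ * sgnDist E y) = psi β (t0 β) (σ * sgnDist E x)
        rw [psi_of_le_neg ht0.le hy1, psi_of_le_neg ht0.le hx2]
    have hzg : HasGradientAt (zfun β σ E) 0 x := by
      rw [hasGradientAt_iff_hasFDerivAt]
      have h0 : HasFDerivAt (fun _ : En n => zfun β σ E x) (0 : En n →L[ℝ] ℝ) x :=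
        hasFDerivAt_const _ _
      have := h0.congr_of_eventuallyEq hev
      simpa using this
    refine ⟨0, hzg, hzg.gradient, ?_, fun h => absurd h (not_lt.2 hxR)⟩
    rw [norm_zero, max_eq_right (by linarith), mul_zero]

lemma grad_lip (hR : 0 < R) (hE : IsOpen E)
    (hUR : ∀ p ∈ frontier E, ∃ p' p'' : En n,
      dist p p' = R ∧ dist p p'' = R ∧ ball p' R ⊆ E ∧ ball p'' R ⊆ Eᶜ)
    (hne : (frontier E).Nonempty) (hβ : 4 / R^2 ≤ β) (hσ : |σ| = 1)
    (x y : En n) :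
    ‖gradient (zfun β σ E) x - gradient (zfun β σ E) y‖ ≤ 12 * β * dist x y := by
  have hb := beta_pos hR hβ
  have ht0 := t0_pos hR hβ
  have ht0half := t0_le hR hβ
  have ht0R : t0 β < R := lt_of_le_of_lt ht0half (by linarith)
  obtain ⟨gx, hgx, hgxe, hgxn, hgxf⟩ := grad_spec hR hE hUR hne hβ hσ x
  obtain ⟨gy, hgy, hgye, hgyn, hgyf⟩ := grad_spec hR hE hUR hne hβ hσ y
  rw [hgxe, hgye]
  have hdd : |sgnDist E x - sgnDist E y| ≤ 2 * dist x y := sgnDist_lip E x y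
  by_cases hx1 : |sgnDist E x| < t0 β
  · by_cases hy1 : |sgnDist E y| < t0 β
    · -- main case
      obtain ⟨p, ν, hNDx, hgxv⟩ := hgxf (lt_trans hx1 ht0R)
      obtain ⟨p', ν', hNDy, hgyv⟩ := hgyf (lt_trans hy1 ht0R)
      set A := psi' β (t0 β) (σ * sgnDist E x) with hA
      set B := psi' β (t0 β) (σ * sgnDist E y) with hB
      have hnorm : ‖gx - gy‖ = ‖A • ν - B • ν'‖ := by
        rw [hgxv, hgyv, mul_smul, mul_smul, ← smul_sub, norm_smul, Real.norm_eq_abs,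
          hσ, one_mul]
      have hsplit : A • ν - B • ν' = (A - B) • ν + B • (ν - ν') := by
        rw [sub_smul, smul_sub]
        abel
      have hABle : |A - B| ≤ 8 * β * dist x y := by
        have := psi'_lip (t₀ := t0 β) hb.le (σ * sgnDist E x) (σ * sgnDist E y)
        rw [← mul_sub, abs_mul, hσ, one_mul] at this
        rw [← hA, ← hB] at this
        nlinarith [abs_nonneg (sgnDist E x - sgnDist E y)]
      have hBle : |B| ≤ Real.sqrt β := by
        rw [abs_of_nonneg (psi'_nonneg hb.le ht0.le _), ← beta_t0 hR hβ]
        exact psi'_le hb.le ht0.le _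
      have hproj : ‖p' - p‖ ≤ 2 * dist x y :=
        hNDx.proj_est hE hR hNDy (by linarith) (by linarith)
      have hnu : R * ‖ν - ν'‖ ≤ 2 * ‖p' - p‖ := hNDx.normal_est hE hR hNDy
      have hRs : 2 ≤ Real.sqrt β * R := by
        have := sqrt_beta_ge hR hβ
        rw [div_le_iff₀ hR] at this
        linarith
      have hsb : Real.sqrt β ≤ β * R := by
        have h1 : Real.sqrt β * 2 ≤ Real.sqrt β * (Real.sqrt β * R) :=
          mul_le_mul_of_nonneg_left hRs (Real.sqrt_nonneg β)
        have h2 : Real.sqrt β * (Real.sqrt β * R) = β * R := by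
          rw [← mul_assoc, Real.mul_self_sqrt hb.le]
        nlinarith [Real.sqrt_nonneg β]
      have hterm2 : |B| * ‖ν - ν'‖ ≤ 4 * β * dist x y := by
        have hnn : 0 ≤ ‖ν - ν'‖ := norm_nonneg _
        have h1 : R * ‖ν - ν'‖ ≤ 4 * dist x y := by linarith
        have h2 : |B| * (R * ‖ν - ν'‖) ≤ Real.sqrt β * (4 * dist x y) :=
          mul_le_mul hBle h1 (by positivity) (Real.sqrt_nonneg β)
        have h3 : Real.sqrt β * (4 * dist x y) ≤ β * R * (4 * dist x y) := by
          apply mul_le_mul_of_nonneg_right hsb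
          positivity
        have h4 : |B| * (R * ‖ν - ν'‖) = R * (|B| * ‖ν - ν'‖) := by ring
        have h5 : β * R * (4 * dist x y) = R * (4 * β * dist x y) := by ring
        rw [h4] at h2
        rw [h5] at h3
        have := le_trans h2 h3
        exact le_of_mul_le_mul_left this hR
      calc ‖gx - gy‖ = ‖A • ν - B • ν'‖ := hnorm
        _ ≤ ‖(A - B) • ν‖ + ‖B • (ν - ν')‖ := by
            rw [hsplit]; exact norm_add_le _ _
        _ = |A - B| * 1 + |B| * ‖ν - ν'‖ := by
            rw [norm_smul, norm_smul, Real.norm_eq_abs, Real.norm_eq_abs, hNDx.unit]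
        _ ≤ 8 * β * dist x y + 4 * β * dist x y := by
            rw [mul_one]; exact add_le_add hABle hterm2
        _ = 12 * β * dist x y := by ring
    · -- x small, y big
      push_neg at hy1
      have hgy0 : gy = 0 := by
        rw [← norm_eq_zero, hgyn, max_eq_right (by linarith), mul_zero]
      have hgxn' : ‖gx‖ ≤ β * (t0 β - |sgnDist E x|) := by
        rw [hgxn, max_eq_left (by linarith)]
      have h6 : |sgnDist E y| - |sgnDist E x| ≤ |sgnDist E x - sgnDist E y| := by
        have := abs_sub_abs_le_abs_sub (sgnDist E y) (sgnDist E x)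
        rw [abs_sub_comm] at this
        linarith
      have hstep : t0 β - |sgnDist E x| ≤ 2 * dist x y := by linarith
      have hmul := mul_le_mul_of_nonneg_left hstep hb.le
      have hdn : (0:ℝ) ≤ dist x y := dist_nonneg
      have hbd : 0 ≤ β * dist x y := mul_nonneg hb.le hdn
      rw [hgy0, sub_zero]
      linarith only [hgxn', hmul, hbd]
  · push_neg at hx1
    have hgx0 : gx = 0 := by
      rw [← norm_eq_zero, hgxn, max_eq_right (by linarith), mul_zero]
    by_cases hy1 : |sgnDist E y| < t0 β
    · have hgyn' : ‖gy‖ ≤ β * (t0 β - |sgnDist E y|) := by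
        rw [hgyn, max_eq_left (by linarith)]
      have h6 : |sgnDist E x| - |sgnDist E y| ≤ |sgnDist E x - sgnDist E y| :=
        abs_sub_abs_le_abs_sub _ _
      have hstep : t0 β - |sgnDist E y| ≤ 2 * dist x y := by linarith
      have hmul := mul_le_mul_of_nonneg_left hstep hb.le
      have hdn : (0:ℝ) ≤ dist x y := dist_nonneg
      have hbd : 0 ≤ β * dist x y := mul_nonneg hb.le hdn
      rw [hgx0, zero_sub, norm_neg]
      linarith only [hgyn', hmul, hbd]
    · push_neg at hy1
      have hgy0 : gy = 0 := by
        rw [← norm_eq_zero, hgyn, max_eq_right (by linarith), mul_zero]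
      rw [hgx0, hgy0, sub_zero, norm_zero]
      positivity

end Master

lemma zfun_package (hR : 0 < R) (hE : IsOpen E)
    (hUR : ∀ p ∈ frontier E, ∃ p' p'' : En n,
      dist p p' = R ∧ dist p p'' = R ∧ ball p' R ⊆ E ∧ ball p'' R ⊆ Eᶜ)
    (hne : (frontier E).Nonempty) (hβ : 4 / R^2 ≤ β) (hσ : |σ| = 1) :
    ContDiff ℝ 1 (zfun β σ E) ∧
    LipschitzWith (Real.toNNReal (12 * β)) (fun x => gradient (zfun β σ E) x) ∧
    (∀ x, lapl (zfun β σ E) x ≤ (n : ℝ) * (12 * β)) ∧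
    (∀ x, ‖gradient (zfun β σ E) x‖ ≤ Real.sqrt β) := by
  have hb := beta_pos hR hβ
  have ht0 := t0_pos hR hβ
  have hspec := grad_spec hR hE hUR hne hβ hσ
  have hdiffAt : ∀ x, DifferentiableAt ℝ (zfun β σ E) x := by
    intro x
    obtain ⟨g, hg, -⟩ := hspec x
    exact (hasGradientAt_iff_hasFDerivAt.1 hg).differentiableAt
  have hlip : LipschitzWith (Real.toNNReal (12 * β))
      (fun x => gradient (zfun β σ E) x) := by
    apply LipschitzWith.of_dist_le_mul
    intro x y
    rw [Real.coe_toNNReal _ (by positivity), dist_eq_norm]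
    exact grad_lip hR hE hUR hne hβ hσ x y
  have hfd : ∀ x, fderiv ℝ (zfun β σ E) x
      = (InnerProductSpace.toDual ℝ (En n)) (gradient (zfun β σ E) x) := by
    intro x
    obtain ⟨g, hg, hge, -⟩ := hspec x
    rw [hge]
    exact (hasGradientAt_iff_hasFDerivAt.1 hg).fderiv
  have hcont : Continuous (fderiv ℝ (zfun β σ E)) := by
    rw [show fderiv ℝ (zfun β σ E)
        = fun x => (InnerProductSpace.toDual ℝ (En n)) (gradient (zfun β σ E) x)
      from funext hfd]
    exact (LinearIsometryEquiv.continuous _).comp hlip.continuous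
  refine ⟨contDiff_one_iff_fderiv.2 ⟨hdiffAt, hcont⟩, hlip, ?_, ?_⟩
  · intro x
    have hterm : ∀ i : Fin n,
        fderiv ℝ (fun y => fderiv ℝ (zfun β σ E) y (EuclideanSpace.single i 1)) x
          (EuclideanSpace.single i 1) ≤ 12 * β := by
      intro i
      set h := fun y => fderiv ℝ (zfun β σ E) y (EuclideanSpace.single i 1) with hh
      have hsingle : ‖(EuclideanSpace.single i 1 : En n)‖ = 1 := by
        rw [EuclideanSpace.norm_single]; norm_num
      have hliph : LipschitzWith (Real.toNNReal (12 * β)) h := by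
        apply LipschitzWith.of_dist_le_mul
        intro y y'
        rw [Real.coe_toNNReal _ (by positivity), Real.dist_eq]
        have e1 : h y - h y' = (fderiv ℝ (zfun β σ E) y - fderiv ℝ (zfun β σ E) y')
            (EuclideanSpace.single i 1) := by
          rw [ContinuousLinearMap.sub_apply]
        have e2 : |h y - h y'| ≤ ‖fderiv ℝ (zfun β σ E) y - fderiv ℝ (zfun β σ E) y'‖ := by
          have e5 := ContinuousLinearMap.le_opNorm
            (fderiv ℝ (zfun β σ E) y - fderiv ℝ (zfun β σ E) y')
            (EuclideanSpace.single i 1 : En n)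
          rw [hsingle, mul_one] at e5
          rw [e1, ← Real.norm_eq_abs]
          exact e5
        have e3 : ‖fderiv ℝ (zfun β σ E) y - fderiv ℝ (zfun β σ E) y'‖
            = ‖gradient (zfun β σ E) y - gradient (zfun β σ E) y'‖ := by
          rw [hfd y, hfd y', ← map_sub, LinearIsometryEquiv.norm_map]
        have e4 := grad_lip hR hE hUR hne hβ hσ y y'
        rw [e3] at e2
        linarith
      have h1 : ‖fderiv ℝ h x‖ ≤ ((Real.toNNReal (12 * β) : ℝ≥0) : ℝ) :=
        norm_fderiv_le_of_lipschitz ℝ hliph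
      rw [Real.coe_toNNReal _ (by positivity)] at h1
      have h2 := ContinuousLinearMap.le_opNorm (fderiv ℝ h x)
        (EuclideanSpace.single i 1 : En n)
      rw [hsingle, mul_one] at h2
      have h3 : fderiv ℝ h x (EuclideanSpace.single i 1)
          ≤ ‖fderiv ℝ h x (EuclideanSpace.single i 1)‖ := le_abs_self _
      linarith
    calc lapl (zfun β σ E) x ≤ ∑ _i : Fin n, 12 * β := Finset.sum_le_sum fun i _ => hterm i
      _ = (n : ℝ) * (12 * β) := by
        rw [Finset.sum_const, Finset.card_univ, Fintype.card_fin, nsmul_eq_mul]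
  · intro x
    obtain ⟨g, hg, hge, hgn, -⟩ := hspec x
    rw [hge, hgn, ← beta_t0 hR hβ]
    apply mul_le_mul_of_nonneg_left _ hb.le
    exact max_le (by linarith [abs_nonneg (sgnDist E x)]) ht0.le

lemma sgnDist_neg_of_mem {E : Set (En n)} (hE : IsOpen E) (hEc : Eᶜ.Nonempty)
    {x : En n} (hx : x ∈ E) : sgnDist E x < 0 := by
  rw [sgnDist_eq_of_mem hE hx, neg_lt, neg_zero]
  obtain ⟨ε, hε, hball⟩ := Metric.isOpen_iff.1 hE x hx
  exact lt_of_lt_of_le hε (le_infDist_compl_of_ball_subset hball hEc)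

lemma lapl_const (c : ℝ) (x : En n) : lapl (fun _ : En n => c) x = 0 := by
  unfold lapl
  have h1 : ∀ i : Fin n, (fun y : En n => fderiv ℝ (fun _ : En n => c) y
      (EuclideanSpace.single i 1)) = fun _ : En n => (0:ℝ) := by
    intro i
    funext y
    rw [fderiv_const_apply]
    rfl
  apply Finset.sum_eq_zero
  intro i _
  rw [h1 i, fderiv_const_apply]
  rfl

end S5
/-- Lemma `derivnorm`. For every `R > 0` there are constants
`c, β₀ > 0` depending only on `R` (and the dimension) such that, whenever `Ω ⊆ ℝⁿ` is
a bounded open set of class `C^{1,1}` and `Ω₁ ∈ U_R(Ω)` with `Γ = ∂Ω₁` and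
`Ω₂ = Ω \ closure Ω₁`, for every `β ≥ β₀` there exist `W^{2,∞}` functions
`z₁, z₂` satisfying: (i) `1/2 ≤ z_i ≤ 1` on `Ω_i` with `z₂ ≡ 1/2` near `∂Ω`;
(ii) `Δz_i ≤ c β z_i` on `Ω_i`; (iii) `z₁ = z₂ = 1` on `Γ` and
`∂_ν z₁ = -∂_ν z₂ ≥ √β` on `Γ`; (iv) `‖∇z_i‖_∞ ≤ c √β` and `‖∇²z_i‖_∞ ≤ c β`. -/
theorem statement_5 (n : ℕ) (R : ℝ) (hR : 0 < R) :
    ∃ c > 0, ∃ β₀ > 0, ∀ Ω Ω₁ : Set (En n),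
      IsC11Set Ω → Bornology.IsBounded Ω → URin R Ω Ω₁ →
      ∀ β ≥ β₀, ∃ z₁ z₂ : En n → ℝ,
        ContDiff ℝ 1 z₁ ∧ ContDiff ℝ 1 z₂ ∧
        LipschitzWith (Real.toNNReal (c * β)) (fun x => gradient z₁ x) ∧
        LipschitzWith (Real.toNNReal (c * β)) (fun x => gradient z₂ x) ∧
        (∀ x ∈ Ω₁, z₁ x ∈ Icc (1/2 : ℝ) 1) ∧
        (∀ x ∈ Ω \ closure Ω₁, z₂ x ∈ Icc (1/2 : ℝ) 1) ∧
        (∃ δ > 0, ∀ x ∈ (Ω \ closure Ω₁) ∩ thickening δ (frontier Ω), z₂ x = 1/2) ∧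
        (∀ᵐ x ∂(volume.restrict Ω₁), lapl z₁ x ≤ c * β * z₁ x) ∧
        (∀ᵐ x ∂(volume.restrict (Ω \ closure Ω₁)), lapl z₂ x ≤ c * β * z₂ x) ∧
        (∀ x ∈ frontier Ω₁, z₁ x = 1 ∧ z₂ x = 1 ∧
          ∀ ν : En n, IsOuterNormal Ω₁ x ν →
            ⟪gradient z₁ x, ν⟫ = -⟪gradient z₂ x, ν⟫ ∧
            Real.sqrt β ≤ ⟪gradient z₁ x, ν⟫) ∧
        (∀ x ∈ Ω₁, ‖gradient z₁ x‖ ≤ c * Real.sqrt β) ∧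
        (∀ x ∈ Ω \ closure Ω₁, ‖gradient z₂ x‖ ≤ c * Real.sqrt β) := by
  refine ⟨48 * ((n:ℝ) + 1), by positivity, 4 / R^2, div_pos (by norm_num) (pow_pos hR 2), ?_⟩
  intro Ω Ω₁ hΩ hbd hUR β hβ
  obtain ⟨⟨hΩ₁open, hΩ₁tb⟩, hΩ₁sub, hΩ₁dist⟩ := hUR
  have hΩopen : IsOpen Ω := hΩ.1
  have hβ' : 4 / R^2 ≤ β := hβ
  have hb : 0 < β := S5.beta_pos hR hβ'
  have hc1 : (1:ℝ) ≤ 48 * ((n:ℝ) + 1) := by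
    have : (0:ℝ) ≤ (n:ℝ) := Nat.cast_nonneg n
    nlinarith
  have hc12 : (12:ℝ) ≤ 48 * ((n:ℝ) + 1) := by
    have : (0:ℝ) ≤ (n:ℝ) := Nat.cast_nonneg n
    nlinarith
  by_cases hfr : (frontier Ω₁).Nonempty
  · -- main case
    obtain ⟨hΩ₁ne, hΩ₁cne⟩ := S5.nonempty_pair hfr
    have hσ1 : |(1:ℝ)| = 1 := abs_one
    have hσ2 : |(-1:ℝ)| = 1 := by rw [abs_neg, abs_one]
    obtain ⟨hcd1, hlip1, hlapl1, hgn1⟩ := S5.zfun_package hR hΩ₁open hΩ₁tb hfr hβ' hσ1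
    obtain ⟨hcd2, hlip2, hlapl2, hgn2⟩ := S5.zfun_package hR hΩ₁open hΩ₁tb hfr hβ' hσ2
    set t₀ := S5.t0 β with ht₀def
    have ht0pos := S5.t0_pos hR hβ'
    have ht0le := S5.t0_le hR hβ'
    have hbt := S5.beta_t0_sq hR hβ'
    have hbt0 := S5.beta_t0 hR hβ'
    refine ⟨S5.zfun β 1 Ω₁, S5.zfun β (-1) Ω₁, hcd1, hcd2, ?_, ?_, ?_, ?_, ?_, ?_, ?_, ?_, ?_, ?_⟩
    · exact hlip1.weaken (Real.toNNReal_mono (by nlinarith))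
    · exact hlip2.weaken (Real.toNNReal_mono (by nlinarith))
    · -- z₁ ∈ Icc on Ω₁
      intro x hx
      have hd := S5.sgnDist_neg_of_mem hΩ₁open hΩ₁cne hx
      have : (1:ℝ) * sgnDist Ω₁ x ≤ 0 := by linarith
      exact S5.psi_mem hb.le ht0pos.le hbt this
    · -- z₂ ∈ Icc on Ω₂
      intro x hx
      have hd : 0 < sgnDist Ω₁ x := by
        rw [S5.sgnDist_eq_of_not_mem_closure hx.2]
        obtain ⟨ε, hε, hball⟩ := Metric.isOpen_iff.1
          (isOpen_compl_iff.2 isClosed_closure) x hx.2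
        refine lt_of_lt_of_le hε (S5.le_infDist' hΩ₁ne fun y hy => ?_)
        by_contra hlt
        push_neg at hlt
        exact (hball (mem_ball'.2 hlt)) (subset_closure hy)
      have : (-1:ℝ) * sgnDist Ω₁ x ≤ 0 := by linarith
      exact S5.psi_mem hb.le ht0pos.le hbt this
    · -- z₂ = 1/2 near ∂Ω
      refine ⟨R/2, by linarith, ?_⟩
      intro x hx
      obtain ⟨hx1, hx2⟩ := hx
      obtain ⟨y, hy, hxy⟩ := Metric.mem_thickening_iff.1 hx2
      have hd : R/2 ≤ sgnDist Ω₁ x := by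
        rw [S5.sgnDist_eq_of_not_mem_closure hx1.2]
        refine S5.le_infDist' hΩ₁ne fun z hz => ?_
        have h1 := hΩ₁dist z hz y hy
        have h2 := dist_triangle z x y
        rw [dist_comm x z]
        linarith
      have hs : (-1:ℝ) * sgnDist Ω₁ x ≤ -t₀ := by
        have := mul_le_mul_of_nonneg_left hd (by norm_num : (0:ℝ) ≤ 1)
        nlinarith
      exact S5.psi_of_le_neg ht0pos.le hs
    · -- lapl z₁ a.e.
      rw [MeasureTheory.ae_restrict_iff' hΩ₁open.measurableSet]
      refine MeasureTheory.ae_of_all _ fun x hx => ?_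
      have h1 := hlapl1 x
      have hd := S5.sgnDist_neg_of_mem hΩ₁open hΩ₁cne hx
      have h2 := (S5.psi_mem hb.le ht0pos.le hbt
        (show (1:ℝ) * sgnDist Ω₁ x ≤ 0 by linarith)).1
      have hn0 : (0:ℝ) ≤ (n:ℝ) := Nat.cast_nonneg n
      have : (n:ℝ) * (12 * β) ≤ 48 * ((n:ℝ) + 1) * β * (1/2) := by nlinarith
      calc lapl (S5.zfun β 1 Ω₁) x ≤ (n:ℝ) * (12 * β) := h1
        _ ≤ 48 * ((n:ℝ) + 1) * β * (1/2) := this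
        _ ≤ 48 * ((n:ℝ) + 1) * β * S5.zfun β 1 Ω₁ x := by
            apply mul_le_mul_of_nonneg_left h2 (by positivity)
    · -- lapl z₂ a.e.
      rw [MeasureTheory.ae_restrict_iff' ((hΩopen.sdiff isClosed_closure).measurableSet)]
      refine MeasureTheory.ae_of_all _ fun x hx => ?_
      have h1 := hlapl2 x
      have hd : 0 < sgnDist Ω₁ x := by
        rw [S5.sgnDist_eq_of_not_mem_closure hx.2]
        obtain ⟨ε, hε, hball⟩ := Metric.isOpen_iff.1
          (isOpen_compl_iff.2 isClosed_closure) x hx.2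
        refine lt_of_lt_of_le hε (S5.le_infDist' hΩ₁ne fun y hy => ?_)
        by_contra hlt
        push_neg at hlt
        exact (hball (mem_ball'.2 hlt)) (subset_closure hy)
      have h2 := (S5.psi_mem hb.le ht0pos.le hbt
        (show (-1:ℝ) * sgnDist Ω₁ x ≤ 0 by linarith)).1
      have hn0 : (0:ℝ) ≤ (n:ℝ) := Nat.cast_nonneg n
      have : (n:ℝ) * (12 * β) ≤ 48 * ((n:ℝ) + 1) * β * (1/2) := by nlinarith
      calc lapl (S5.zfun β (-1) Ω₁) x ≤ (n:ℝ) * (12 * β) := h1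
        _ ≤ 48 * ((n:ℝ) + 1) * β * (1/2) := this
        _ ≤ 48 * ((n:ℝ) + 1) * β * S5.zfun β (-1) Ω₁ x := by
            apply mul_le_mul_of_nonneg_left h2 (by positivity)
    · -- frontier conditions
      intro x hx
      have hd0 : sgnDist Ω₁ x = 0 := S5.sgnDist_frontier hΩ₁open hx
      have hz1 : S5.zfun β 1 Ω₁ x = 1 := by
        show S5.psi β t₀ (1 * sgnDist Ω₁ x) = 1
        rw [hd0, mul_zero]
        exact S5.psi_zero ht0pos.le hbt
      have hz2 : S5.zfun β (-1) Ω₁ x = 1 := by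
        show S5.psi β t₀ ((-1) * sgnDist Ω₁ x) = 1
        rw [hd0, mul_zero]
        exact S5.psi_zero ht0pos.le hbt
      refine ⟨hz1, hz2, ?_⟩
      intro ν hν
      obtain ⟨hνu, r, hr, hbin, hbout⟩ := hν
      have hdR : |sgnDist Ω₁ x| < R := by rw [hd0, abs_zero]; exact hR
      obtain ⟨g₁, hg₁, hge₁, hgn₁, hgf₁⟩ := S5.grad_spec hR hΩ₁open hΩ₁tb hfr hβ' hσ1 x
      obtain ⟨g₂, hg₂, hge₂, hgn₂, hgf₂⟩ := S5.grad_spec hR hΩ₁open hΩ₁tb hfr hβ' hσ2 x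
      obtain ⟨p₁, ν₁, hND₁, hgv₁⟩ := hgf₁ hdR
      obtain ⟨p₂, ν₂, hND₂, hgv₂⟩ := hgf₂ hdR
      have hp₁ : p₁ = x := by
        have := hND₁.rep
        rw [hd0, zero_smul, add_zero] at this
        exact this.symm
      have hp₂ : p₂ = x := by
        have := hND₂.rep
        rw [hd0, zero_smul, add_zero] at this
        exact this.symm
      have hνν₁ : ν = ν₁ := by
        apply S5.normal_unique hr hR hνu hND₁.unit hbin
        rw [← hp₁]
        exact hND₁.outb
      have hνν₂ : ν = ν₂ := by
        apply S5.normal_unique hr hR hνu hND₂.unit hbin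
        rw [← hp₂]
        exact hND₂.outb
      have hpz : S5.psi' β t₀ 0 = β * t₀ := S5.psi'_zero ht0pos.le
      have hv₁ : g₁ = (β * t₀) • ν := by
        rw [hgv₁, hd0, mul_zero, one_mul, hpz, hνν₁]
      have hv₂ : g₂ = -((β * t₀) • ν) := by
        rw [hgv₂, hd0, mul_zero, hpz, hνν₂, neg_one_mul, neg_smul]
      have hiν : ⟪ν, ν⟫ = 1 := by
        rw [real_inner_self_eq_norm_sq, hνu]
        norm_num
      have hi₁ : ⟪gradient (S5.zfun β 1 Ω₁) x, ν⟫ = β * t₀ := by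
        rw [hge₁, hv₁, real_inner_smul_left, hiν, mul_one]
      have hi₂ : ⟪gradient (S5.zfun β (-1) Ω₁) x, ν⟫ = -(β * t₀) := by
        rw [hge₂, hv₂, inner_neg_left, real_inner_smul_left, hiν, mul_one]
      constructor
      · rw [hi₁, hi₂, neg_neg]
      · rw [hi₁, ← hbt0]
    · -- gradient z₁ bound
      intro x _
      refine le_trans (hgn1 x) ?_
      nlinarith [Real.sqrt_nonneg β]
    · -- gradient z₂ bound
      intro x _
      refine le_trans (hgn2 x) ?_
      nlinarith [Real.sqrt_nonneg β]
  · -- degenerate case: frontier Ω₁ = ∅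
    have hgr : (fun x : En n => gradient (fun _ : En n => (1:ℝ)/2) x)
        = fun _ : En n => (0 : En n) := by
      funext x
      exact gradient_const x (1/2)
    have hlipc : LipschitzWith (Real.toNNReal (48 * ((n:ℝ) + 1) * β))
        (fun x : En n => gradient (fun _ : En n => (1:ℝ)/2) x) := by
      rw [hgr]
      apply LipschitzWith.of_dist_le_mul
      intro x y
      simp only [dist_self]
      positivity
    refine ⟨fun _ => 1/2, fun _ => 1/2, contDiff_const, contDiff_const, hlipc, hlipc,
      ?_, ?_, ⟨1, by norm_num, fun x _ => rfl⟩, ?_, ?_, ?_, ?_, ?_⟩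
    · intro x _
      constructor <;> norm_num
    · intro x _
      constructor <;> norm_num
    · refine MeasureTheory.ae_of_all _ fun x => ?_
      rw [S5.lapl_const]
      positivity
    · refine MeasureTheory.ae_of_all _ fun x => ?_
      rw [S5.lapl_const]
      positivity
    · intro x hx
      exact absurd ⟨x, hx⟩ hfr
    · intro x _
      rw [gradient_fun_const]
      simp only [norm_zero]
      positivity
    · intro x _
      rw [gradient_fun_const]
      simp only [norm_zero]
      positivity
end
end

section
/- Let E ⊂ ℝⁿ be an open set belonging to U_R for some R > 0. Then the nearest-point projection π_E onto ∂E is well defined and of class W^{1,∞} in the open (R/2)-neighbourhood of ∂E, the signed distance d_E is of class W^{2,∞} in that neighbourhood, and there is a positive constant C depending only on R such that ‖d_E‖_{W^{2,∞}} ≤ C and ‖π_E‖_{W^{1,∞}} ≤ C on the (R/2)-neighbourhood of ∂E. -/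
open MeasureTheory Metric Set Filter Topology RealInnerProductSpace
open scoped ENNReal NNReal

noncomputable section

variable {n : ℕ}

namespace S13

variable {n : ℕ} {R : ℝ} {E : Set (En n)}

/-- `ν` is an outer unit normal at `p` realized by tangent balls of radius `R`. -/
def Nml (R : ℝ) (E : Set (En n)) (p ν : En n) : Prop :=
  ‖ν‖ = 1 ∧ ball (p - R • ν) R ⊆ E ∧ ball (p + R • ν) R ⊆ Eᶜ

lemma exists_nml (hR : 0 < R) (hE : UR R E) {p : En n} (hp : p ∈ frontier E) :
    ∃ ν, Nml R E p ν := by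
  obtain ⟨p', p'', h1, h2, h3, h4⟩ := hE.2 p hp
  have hdd : 2 * R ≤ dist p' p'' := by
    by_contra h
    push_neg at h
    have hm1 : midpoint ℝ p' p'' ∈ ball p' R := by
      rw [mem_ball, dist_comm, dist_left_midpoint, Real.norm_two]
      linarith
    have hm2 : midpoint ℝ p' p'' ∈ ball p'' R := by
      rw [mem_ball, dist_comm, dist_right_midpoint, Real.norm_two]
      linarith
    exact (h4 hm2) (h3 hm1)
  set a := p - p' with ha
  set b := p'' - p with hb
  have hna : ‖a‖ = R := by rw [ha, ← dist_eq_norm]; exact h1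
  have hnb : ‖b‖ = R := by rw [hb, ← dist_eq_norm, dist_comm]; exact h2
  have hab : ‖a + b‖ = 2 * R := by
    have h5 : a + b = p'' - p' := by rw [ha, hb]; abel
    have h6 : ‖a + b‖ ≤ 2 * R := by
      calc ‖a + b‖ ≤ ‖a‖ + ‖b‖ := norm_add_le a b
        _ = 2 * R := by rw [hna, hnb]; ring
    have h7 : 2 * R ≤ ‖a + b‖ := by rw [h5, ← dist_eq_norm, dist_comm]; exact hdd
    linarith
  have hinner : ⟪a, b⟫ = ‖a‖ * ‖b‖ := by
    have h8 := norm_add_sq_real a b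
    rw [hab, hna, hnb] at h8
    rw [hna, hnb]
    linear_combination (-1/2 : ℝ) * h8
  have heq : a = b := by
    have h8 := inner_eq_norm_mul_iff_real.1 hinner
    rw [hna, hnb] at h8
    exact smul_right_injective _ hR.ne' h8
  refine ⟨R⁻¹ • a, ?_, ?_, ?_⟩
  · rw [norm_smul, hna, Real.norm_eq_abs, abs_of_pos (inv_pos.2 hR), inv_mul_cancel₀ hR.ne']
  · have h9 : p - R • (R⁻¹ • a) = p' := by
      rw [smul_smul, mul_inv_cancel₀ hR.ne', one_smul, ha]; abel
    rwa [h9]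
  · have h9 : p + R • (R⁻¹ • a) = p'' := by
      rw [smul_smul, mul_inv_cancel₀ hR.ne', one_smul, heq, hb]; abel
    rwa [h9]

lemma frontier_far_of_ball_subset (hEo : IsOpen E) {c : En n} {r : ℝ}
    (h : ball c r ⊆ E) {q : En n} (hq : q ∈ frontier E) : r ≤ dist q c := by
  by_contra hlt
  push_neg at hlt
  rw [hEo.frontier_eq] at hq
  exact hq.2 (h hlt)

lemma frontier_far_of_ball_subset_compl {c : En n} {r : ℝ}
    (h : ball c r ⊆ Eᶜ) {q : En n} (hq : q ∈ frontier E) : r ≤ dist q c := by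
  by_contra hlt
  push_neg at hlt
  have h2 : ball c r ⊆ (closure E)ᶜ := by
    rw [← interior_compl]
    exact isOpen_ball.subset_interior_iff.2 h
  exact h2 hlt (frontier_subset_closure hq)

/-- Lemma A: boundary points lie (quadratically) close to the tangent plane. -/
lemma inner_bound (hR : 0 < R) (hEo : IsOpen E) {p ν q : En n}
    (hν : Nml R E p ν) (hq : q ∈ frontier E) :
    |⟪ν, q - p⟫| * (2 * R) ≤ ‖q - p‖ ^ 2 := by
  obtain ⟨hν1, hν2, hν3⟩ := hν
  have hRν : ‖R • ν‖ = R := by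
    rw [norm_smul, hν1, mul_one, Real.norm_eq_abs, abs_of_pos hR]
  have hi : ⟪q - p, R • ν⟫ = R * ⟪ν, q - p⟫ := by
    rw [real_inner_smul_right, real_inner_comm]
  have h1 : R ≤ ‖(q - p) + R • ν‖ := by
    have h := frontier_far_of_ball_subset hEo hν2 hq
    rw [dist_eq_norm] at h
    have he : q - (p - R • ν) = (q - p) + R • ν := by abel
    rwa [he] at h
  have h2 : R ≤ ‖(q - p) - R • ν‖ := by
    have h := frontier_far_of_ball_subset_compl hν3 hq
    rw [dist_eq_norm] at h
    have he : q - (p + R • ν) = (q - p) - R • ν := by abel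
    rwa [he] at h
  have e1 := norm_add_sq_real (q - p) (R • ν)
  have e2 := norm_sub_sq_real (q - p) (R • ν)
  rw [hRν, hi] at e1 e2
  have h1' : R ^ 2 ≤ ‖(q - p) + R • ν‖ ^ 2 := by nlinarith [norm_nonneg ((q - p) + R • ν)]
  have h2' : R ^ 2 ≤ ‖(q - p) - R • ν‖ ^ 2 := by nlinarith [norm_nonneg ((q - p) - R • ν)]
  rcases abs_cases (⟪ν, q - p⟫) with ⟨hc, -⟩ | ⟨hc, -⟩ <;> rw [hc] <;> nlinarith

lemma infDist_frontier_of_mem (hEo : IsOpen E) (hΓ : (frontier E).Nonempty) {x : En n}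
    (hx : x ∈ E) : infDist x Eᶜ = infDist x (frontier E) := by
  have hne : E ≠ univ := by
    rintro rfl
    simp only [frontier_univ] at hΓ
    exact hΓ.ne_empty rfl
  obtain ⟨y, hy, hyd⟩ := exists_mem_frontier_infDist_compl_eq_dist hx hne
  refine le_antisymm ?_ ?_
  · refine infDist_le_infDist_of_subset ?_ hΓ
    intro z hz
    rw [hEo.frontier_eq] at hz
    exact hz.2
  · rw [hyd]
    exact infDist_le_dist_of_mem hy

lemma infDist_frontier_of_not_mem_closure (hΓ : (frontier E).Nonempty) {x : En n}
    (hx : x ∉ closure E) : infDist x E = infDist x (frontier E) := by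
  have hcne : (closure E).Nonempty := hΓ.mono frontier_subset_closure
  have hx' : x ∈ (closure E)ᶜ := hx
  have hne : (closure E)ᶜ ≠ univ := by
    intro h
    obtain ⟨z, hz⟩ := hcne
    have hz' : z ∈ (closure E)ᶜ := h ▸ mem_univ z
    exact hz' hz
  obtain ⟨y, hy, hyd⟩ := exists_mem_frontier_infDist_compl_eq_dist hx' hne
  rw [frontier_compl] at hy
  have hyΓ : y ∈ frontier E := frontier_closure_subset hy
  rw [compl_compl] at hyd
  refine le_antisymm ?_ ?_
  · rw [← infDist_closure (s := E)]
    exact infDist_le_infDist_of_subset frontier_subset_closure hΓ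
  · rw [← infDist_closure (s := E), hyd]
    exact infDist_le_dist_of_mem hyΓ

lemma sgnDist_of_mem (hEo : IsOpen E) (hΓ : (frontier E).Nonempty) {x : En n}
    (hx : x ∈ E) : sgnDist E x = -infDist x (frontier E) := by
  rw [sgnDist, infDist_zero_of_mem hx, infDist_frontier_of_mem hEo hΓ hx, zero_sub]

lemma sgnDist_of_not_mem_closure (hΓ : (frontier E).Nonempty) {x : En n}
    (hx : x ∉ closure E) : sgnDist E x = infDist x (frontier E) := by
  have hxc : x ∈ Eᶜ := fun h => hx (subset_closure h)
  rw [sgnDist, infDist_zero_of_mem hxc, infDist_frontier_of_not_mem_closure hΓ hx, sub_zero]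

lemma sgnDist_of_frontier (hEo : IsOpen E) {x : En n} (hx : x ∈ frontier E) :
    sgnDist E x = 0 := by
  have h1 : infDist x E = 0 := infDist_zero_of_mem_closure (frontier_subset_closure hx)
  have h2 : infDist x Eᶜ = 0 := by
    refine infDist_zero_of_mem ?_
    rw [hEo.frontier_eq] at hx
    exact hx.2
  rw [sgnDist, h1, h2, sub_zero]

/-- If a ball of radius `R` is inside `S` and `x` is outside the ball, then `x` is
closer to `S` than to the far side of the ball. -/
lemma infDist_le_of_ball_subset (hR : 0 < R) {c x : En n} {S : Set (En n)}
    (hb : ball c R ⊆ S) (hx : R ≤ ‖x - c‖) : infDist x S ≤ ‖x - c‖ - R := by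
  set m := ‖x - c‖ with hm
  have hm0 : 0 < m := lt_of_lt_of_le hR hx
  have hz : c + (R / m) • (x - c) ∈ closure S := by
    have h1 : c + (R / m) • (x - c) ∈ closedBall c R := by
      rw [mem_closedBall, dist_eq_norm]
      have he : c + (R / m) • (x - c) - c = (R / m) • (x - c) := by abel
      rw [he, norm_smul, Real.norm_eq_abs, abs_of_pos (div_pos hR hm0), ← hm,
        div_mul_cancel₀ _ hm0.ne']
    have h2 : closedBall c R ⊆ closure S := by
      rw [← closure_ball c hR.ne']
      exact closure_mono hb
    exact h2 h1
  calc infDist x S = infDist x (closure S) := infDist_closure.symm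
    _ ≤ dist x (c + (R / m) • (x - c)) := infDist_le_dist_of_mem hz
    _ = m - R := by
        rw [dist_eq_norm]
        have he : x - (c + (R / m) • (x - c)) = (1 - R / m) • (x - c) := by
          rw [sub_smul, one_smul]; abel
        rw [he, norm_smul, Real.norm_eq_abs, ← hm,
          abs_of_nonneg (by rw [sub_nonneg]; exact (div_le_one hm0).2 hx), sub_mul, one_mul,
          div_mul_cancel₀ _ hm0.ne']

/-- Lemma B: the projection formula at any nearest boundary point. -/
lemma proj_formula (hR : 0 < R) (hEo : IsOpen E) {x p ν : En n}
    (hp : p ∈ frontier E) (hd : infDist x (frontier E) = dist x p)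
    (hν : Nml R E p ν) (hlt : infDist x (frontier E) < R) :
    x - p = sgnDist E x • ν ∧ |sgnDist E x| = infDist x (frontier E) := by
  obtain ⟨hν1, hν2, hν3⟩ := hν
  have hΓ : (frontier E).Nonempty := ⟨p, hp⟩
  set D := infDist x (frontier E) with hD
  have hD0 : 0 ≤ D := infDist_nonneg
  have hxp : ‖x - p‖ = D := by rw [← dist_eq_norm, hd]
  have hRν : ‖R • ν‖ = R := by
    rw [norm_smul, hν1, mul_one, Real.norm_eq_abs, abs_of_pos hR]
  have hDν : ‖D • ν‖ = D := by
    rw [norm_smul, hν1, mul_one, Real.norm_eq_abs, abs_of_nonneg hD0]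
  by_cases hxE : x ∈ E
  · -- interior case
    have hsgn : sgnDist E x = -D := sgnDist_of_mem hEo hΓ hxE
    have hxc : R ≤ ‖x - (p + R • ν)‖ := by
      have h0 : x ∉ ball (p + R • ν) R := fun h => (hν3 h) hxE
      rw [mem_ball, dist_eq_norm, not_lt] at h0
      exact h0
    have hDle : D ≤ ‖x - (p + R • ν)‖ - R := by
      rw [hD, ← infDist_frontier_of_mem hEo hΓ hxE]
      exact infDist_le_of_ball_subset hR hν3 hxc
    have he : x - (p + R • ν) = (x - p) - R • ν := by abel
    rw [he] at hDle hxc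
    have e2 := norm_sub_sq_real (x - p) (R • ν)
    have hi : ⟪x - p, R • ν⟫ = R * ⟪x - p, ν⟫ := real_inner_smul_right _ _ _
    rw [hRν, hi, hxp] at e2
    have hsq : (R + D) ^ 2 ≤ ‖(x - p) - R • ν‖ ^ 2 := by
      nlinarith [norm_nonneg ((x - p) - R • ν)]
    have hub : ⟪x - p, ν⟫ ≤ -D := by nlinarith
    have e4 := norm_add_sq_real (x - p) (D • ν)
    have hi2 : ⟪x - p, D • ν⟫ = D * ⟪x - p, ν⟫ := real_inner_smul_right _ _ _
    rw [hDν, hi2, hxp] at e4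
    have hlb : -D ≤ ⟪x - p, ν⟫ := by
      have h5 := abs_real_inner_le_norm (x - p) ν
      rw [hxp, hν1, mul_one] at h5
      linarith [(abs_le.1 h5).1]
    have hzero : ‖(x - p) + D • ν‖ ^ 2 = 0 := by
      have : ⟪x - p, ν⟫ = -D := le_antisymm hub hlb
      rw [e4, this]; ring
    have hzero' : (x - p) + D • ν = 0 :=
      norm_eq_zero.1 ((pow_eq_zero_iff (two_ne_zero)).1 hzero)
    constructor
    · rw [hsgn, neg_smul]
      exact eq_neg_of_add_eq_zero_left hzero'
    · rw [hsgn, abs_neg, abs_of_nonneg hD0]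
  · by_cases hxC : x ∈ closure E
    · -- frontier case
      have hxΓ : x ∈ frontier E := by
        rw [hEo.frontier_eq]; exact ⟨hxC, hxE⟩
      have hD0' : D = 0 := by rw [hD]; exact infDist_zero_of_mem hxΓ
      have hpx : p = x := by
        have h5 : dist x p = 0 := by rw [← hd, hD0']
        rw [dist_eq_zero] at h5
        exact h5.symm
      rw [sgnDist_of_frontier hEo hxΓ, hpx, hD0']
      simp
    · -- exterior case
      have hsgn : sgnDist E x = D := sgnDist_of_not_mem_closure hΓ hxC
      have hxc : R ≤ ‖x - (p - R • ν)‖ := by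
        have h0 : x ∉ ball (p - R • ν) R := fun h => hxC (subset_closure (hν2 h))
        rw [mem_ball, dist_eq_norm, not_lt] at h0
        exact h0
      have hDle : D ≤ ‖x - (p - R • ν)‖ - R := by
        rw [hD, ← infDist_frontier_of_not_mem_closure hΓ hxC]
        exact infDist_le_of_ball_subset hR hν2 hxc
      have he : x - (p - R • ν) = (x - p) + R • ν := by abel
      rw [he] at hDle hxc
      have e2 := norm_add_sq_real (x - p) (R • ν)
      have hi : ⟪x - p, R • ν⟫ = R * ⟪x - p, ν⟫ := real_inner_smul_right _ _ _
      rw [hRν, hi, hxp] at e2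
      have hsq : (R + D) ^ 2 ≤ ‖(x - p) + R • ν‖ ^ 2 := by
        nlinarith [norm_nonneg ((x - p) + R • ν)]
      have hub : D ≤ ⟪x - p, ν⟫ := by nlinarith
      have e4 := norm_sub_sq_real (x - p) (D • ν)
      have hi2 : ⟪x - p, D • ν⟫ = D * ⟪x - p, ν⟫ := real_inner_smul_right _ _ _
      rw [hDν, hi2, hxp] at e4
      have hlb : ⟪x - p, ν⟫ ≤ D := by
        have h5 := abs_real_inner_le_norm (x - p) ν
        rw [hxp, hν1, mul_one] at h5
        linarith [(abs_le.1 h5).2]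
      have hzero : ‖(x - p) - D • ν‖ ^ 2 = 0 := by
        have : ⟪x - p, ν⟫ = D := le_antisymm hlb hub
        rw [e4, this]; ring
      have hzero' : (x - p) - D • ν = 0 :=
        norm_eq_zero.1 ((pow_eq_zero_iff (two_ne_zero)).1 hzero)
      constructor
      · rw [hsgn]
        exact sub_eq_zero.1 hzero'
      · rw [hsgn, abs_of_nonneg hD0]

/-- Lipschitz continuity of the normal field along the boundary. -/
lemma nml_lipschitz (hR : 0 < R) (hEo : IsOpen E) {p q νp νq : En n}
    (hp : p ∈ frontier E) (hq : q ∈ frontier E)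
    (hνp : Nml R E p νp) (hνq : Nml R E q νq) :
    R * ‖νp - νq‖ ≤ 2 * ‖p - q‖ := by
  have hdisj : 2 * R ≤ dist (p - R • νp) (q + R • νq) := by
    by_contra h
    push_neg at h
    have hm1 : midpoint ℝ (p - R • νp) (q + R • νq) ∈ ball (p - R • νp) R := by
      rw [mem_ball, dist_comm, dist_left_midpoint, Real.norm_two]
      linarith
    have hm2 : midpoint ℝ (p - R • νp) (q + R • νq) ∈ ball (q + R • νq) R := by
      rw [mem_ball, dist_comm, dist_right_midpoint, Real.norm_two]
      linarith
    exact (hνq.2.2 hm2) (hνp.2.1 hm1)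
  have hA1 := inner_bound hR hEo hνp hq
  have hA2 := inner_bound hR hEo hνq hp
  set w := p - q with hw
  have hA1' : |⟪νp, w⟫| * (2 * R) ≤ ‖w‖ ^ 2 := by
    have h2 : ⟪νp, q - p⟫ = -⟪νp, w⟫ := by
      have h3 : q - p = -w := by rw [hw]; abel
      rw [h3, inner_neg_right]
    rw [h2, abs_neg, norm_sub_rev q p, ← hw] at hA1
    exact hA1
  have hb1 : -(‖w‖ ^ 2) ≤ 2 * R * ⟪νp, w⟫ := by
    nlinarith [neg_abs_le (⟪νp, w⟫)]
  have hb2 : -(‖w‖ ^ 2) ≤ 2 * R * ⟪νq, w⟫ := by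
    nlinarith [neg_abs_le (⟪νq, w⟫)]
  have hde : p - R • νp - (q + R • νq) = w - R • (νp + νq) := by
    rw [smul_add, hw]; abel
  rw [dist_eq_norm, hde] at hdisj
  have e1 := norm_sub_sq_real w (R • (νp + νq))
  have hi : ⟪w, R • (νp + νq)⟫ = R * (⟪νp, w⟫ + ⟪νq, w⟫) := by
    rw [real_inner_smul_right, inner_add_right, real_inner_comm w νp, real_inner_comm w νq]
  have hns : ‖R • (νp + νq)‖ ^ 2 = R ^ 2 * ‖νp + νq‖ ^ 2 := by
    rw [norm_smul, Real.norm_eq_abs, abs_of_pos hR, mul_pow]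
  rw [hi, hns] at e1
  have e2 := norm_add_sq_real νp νq
  have e3 := norm_sub_sq_real νp νq
  rw [hνp.1, hνq.1] at e2 e3
  have hd2 : (2 * R) ^ 2 ≤ ‖w - R • (νp + νq)‖ ^ 2 := by
    nlinarith [norm_nonneg (w - R • (νp + νq))]
  have hsq : (R * ‖νp - νq‖) ^ 2 ≤ (2 * ‖w‖) ^ 2 := by nlinarith
  nlinarith [mul_nonneg hR.le (norm_nonneg (νp - νq)), norm_nonneg w]

/-- Lipschitz estimate for the projection. -/
lemma proj_lip (hR : 0 < R) (hEo : IsOpen E) {x y p q νp νq : En n} {dx dy : ℝ}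
    (hp : p ∈ frontier E) (hq : q ∈ frontier E)
    (hνp : Nml R E p νp) (hνq : Nml R E q νq)
    (hfp : x - p = dx • νp) (hfq : y - q = dy • νq)
    (hdx : |dx| ≤ R / 2) (hdy : |dy| ≤ R / 2) :
    ‖p - q‖ ≤ 2 * ‖x - y‖ := by
  have hxy : x - y = (p - q) + (dx • νp - dy • νq) := by
    have h0 : x - y = (p - q) + ((x - p) - (y - q)) := by abel
    rw [h0, hfp, hfq]
  have hid : ⟪p - q, x - y⟫ = ‖p - q‖ ^ 2 + (dx * ⟪p - q, νp⟫ - dy * ⟪p - q, νq⟫) := by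
    rw [hxy]
    simp only [inner_add_right, inner_sub_right, real_inner_smul_right]
    rw [← inner_sub_right, real_inner_self_eq_norm_sq]
  have hA1 : |⟪p - q, νp⟫| * (2 * R) ≤ ‖p - q‖ ^ 2 := by
    have h := inner_bound hR hEo hνp hq
    have h2 : ⟪νp, q - p⟫ = -⟪p - q, νp⟫ := by
      have h3 : q - p = -(p - q) := by abel
      rw [h3, inner_neg_right, real_inner_comm]
    rw [h2, abs_neg, norm_sub_rev q p] at h
    exact h
  have hA2 : |⟪p - q, νq⟫| * (2 * R) ≤ ‖p - q‖ ^ 2 := by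
    have h := inner_bound hR hEo hνq hp
    rw [real_inner_comm] at h
    exact h
  have hCS : ⟪p - q, x - y⟫ ≤ ‖p - q‖ * ‖x - y‖ := real_inner_le_norm _ _
  have hb1 : |dx * ⟪p - q, νp⟫| ≤ ‖p - q‖ ^ 2 / 4 := by
    rw [abs_mul]
    nlinarith [abs_nonneg dx, abs_nonneg (⟪p - q, νp⟫)]
  have hb2 : |dy * ⟪p - q, νq⟫| ≤ ‖p - q‖ ^ 2 / 4 := by
    rw [abs_mul]
    nlinarith [abs_nonneg dy, abs_nonneg (⟪p - q, νq⟫)]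
  have hhalf : ‖p - q‖ ^ 2 / 2 ≤ ‖p - q‖ * ‖x - y‖ := by
    have l1 := (abs_le.1 hb1).1
    have l2 := (abs_le.1 hb2).2
    linarith
  nlinarith [norm_nonneg (p - q), norm_nonneg (x - y)]

/-- First order expansion estimate for the signed distance. -/
lemma deriv_est (hR : 0 < R) (hEo : IsOpen E) {x y p q νp νq : En n} {dx dy : ℝ}
    (hp : p ∈ frontier E) (hq : q ∈ frontier E)
    (hνp : Nml R E p νp) (hνq : Nml R E q νq)
    (hfp : x - p = dx • νp) (hfq : y - q = dy • νq)
    (hdx : |dx| ≤ R / 2) (hdy : |dy| ≤ R / 2) :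
    R * |dy - dx - ⟪νp, y - x⟫| ≤ 6 * ‖y - x‖ ^ 2 := by
  have hyx : y - x = (q - p) + (dy • νq - dx • νp) := by
    have h0 : y - x = (q - p) + ((y - q) - (x - p)) := by abel
    rw [h0, hfp, hfq]
  have hip : ⟪νp, y - x⟫ = ⟪νp, q - p⟫ + (dy * ⟪νp, νq⟫ - dx) := by
    rw [hyx]
    simp only [inner_add_right, inner_sub_right, real_inner_smul_right,
      real_inner_self_eq_norm_sq]
    rw [hνp.1]
    ring
  have hexpr : dy - dx - ⟪νp, y - x⟫ = dy * (1 - ⟪νp, νq⟫) - ⟪νp, q - p⟫ := by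
    rw [hip]; ring
  have h1t : ‖νp - νq‖ ^ 2 = 2 - 2 * ⟪νp, νq⟫ := by
    have h2 := norm_sub_sq_real νp νq
    rw [hνp.1, hνq.1] at h2
    rw [h2]; ring
  have ht1 : 0 ≤ 1 - ⟪νp, νq⟫ := by
    have h5 := real_inner_le_norm νp νq
    rw [hνp.1, hνq.1, mul_one] at h5
    linarith
  have hνlip := nml_lipschitz hR hEo hp hq hνp hνq
  have hνsq : (R * ‖νp - νq‖) ^ 2 ≤ (2 * ‖p - q‖) ^ 2 := by
    nlinarith [mul_nonneg hR.le (norm_nonneg (νp - νq)), norm_nonneg (p - q)]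
  have hA : |⟪νp, q - p⟫| * (2 * R) ≤ ‖p - q‖ ^ 2 := by
    have h := inner_bound hR hEo hνp hq
    rwa [norm_sub_rev q p] at h
  have hpq : ‖p - q‖ ≤ 2 * ‖y - x‖ := by
    rw [norm_sub_rev y x]
    exact proj_lip hR hEo hp hq hνp hνq hfp hfq hdx hdy
  have habs_sub : |dy - dx - ⟪νp, y - x⟫| ≤ |dy| * (1 - ⟪νp, νq⟫) + |⟪νp, q - p⟫| := by
    rw [hexpr]
    calc |dy * (1 - ⟪νp, νq⟫) - ⟪νp, q - p⟫|
        ≤ |dy * (1 - ⟪νp, νq⟫)| + |⟪νp, q - p⟫| := abs_sub _ _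
      _ = |dy| * (1 - ⟪νp, νq⟫) + |⟪νp, q - p⟫| := by
          rw [abs_mul, abs_of_nonneg ht1]
  have e4 : R ^ 2 * (1 - ⟪νp, νq⟫) ≤ 2 * ‖p - q‖ ^ 2 := by nlinarith [h1t, hνsq]
  have e5 : ‖p - q‖ ^ 2 ≤ 4 * ‖y - x‖ ^ 2 := by
    nlinarith [norm_nonneg (p - q), norm_nonneg (y - x)]
  have e6 : R * (|dy| * (1 - ⟪νp, νq⟫)) ≤ ‖p - q‖ ^ 2 := by
    nlinarith [abs_nonneg dy, mul_nonneg (abs_nonneg dy) ht1]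
  have e7 : R * |⟪νp, q - p⟫| ≤ ‖p - q‖ ^ 2 / 2 := by linarith
  calc R * |dy - dx - ⟪νp, y - x⟫|
      ≤ R * (|dy| * (1 - ⟪νp, νq⟫) + |⟪νp, q - p⟫|) :=
        mul_le_mul_of_nonneg_left habs_sub hR.le
    _ = R * (|dy| * (1 - ⟪νp, νq⟫)) + R * |⟪νp, q - p⟫| := by ring
    _ ≤ ‖p - q‖ ^ 2 + ‖p - q‖ ^ 2 / 2 := by linarith
    _ ≤ 6 * ‖y - x‖ ^ 2 := by linarith

end S13

/-- Lemma on the projection and signed distance. For every `R > 0`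
there is `C > 0`, depending only on `R` (and the dimension), such that for every open
set `E ∈ U_R`: the nearest-point projection `π_E` onto `∂E` is well defined on the
open `(R/2)`-neighbourhood of `∂E` and is `W^{1,∞}` there; the signed distance `d_E`
is `W^{2,∞}` there; and `‖d_E‖_{W^{2,∞}} ≤ C`, `‖π_E‖_{W^{1,∞}} ≤ C` on that
neighbourhood. -/
theorem statement_13 (n : ℕ) (R : ℝ) (hR : 0 < R) :
    ∃ C > 0, ∀ E : Set (En n), UR R E →
      (∀ x ∈ thickening (R/2) (frontier E),
        ∃! y, y ∈ frontier E ∧ dist x y = infDist x (frontier E)) ∧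
      (∃ π : En n → En n,
        (∀ x ∈ thickening (R/2) (frontier E),
          π x ∈ frontier E ∧ dist x (π x) = infDist x (frontier E)) ∧
        LipschitzOnWith (Real.toNNReal C) π (thickening (R/2) (frontier E))) ∧
      (∀ x ∈ thickening (R/2) (frontier E), DifferentiableAt ℝ (sgnDist E) x) ∧
      (∀ x ∈ thickening (R/2) (frontier E),
        |sgnDist E x| ≤ C ∧ ‖gradient (sgnDist E) x‖ ≤ C) ∧
      LipschitzOnWith (Real.toNNReal C) (gradient (sgnDist E))
        (thickening (R/2) (frontier E)) := by
  classical
  have hRinv : 0 < 4 / R := by positivity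
  refine ⟨2 + R + 4 / R, by positivity, fun E hE => ?_⟩
  set C := 2 + R + 4 / R with hCdef
  have hC0 : (0:ℝ) ≤ C := by positivity
  have hCR : C * R = 2 * R + R ^ 2 + 4 := by
    rw [hCdef]; field_simp
  have hCcoe : ((Real.toNNReal C : ℝ≥0) : ℝ) = C := Real.coe_toNNReal _ hC0
  have hEo : IsOpen E := hE.1
  set Γ := frontier E with hΓdef
  set T := thickening (R/2) Γ with hTdef
  -- choice of normals
  have hex : ∀ p ∈ Γ, ∃ ν, S13.Nml R E p ν := fun p hp => S13.exists_nml hR hE hp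
  choose! ν hν using hex
  -- nearest points exist
  have hnear : ∀ x ∈ T, ∃ p ∈ Γ, infDist x Γ = dist x p := by
    intro x hx
    have hΓne : Γ.Nonempty := by
      by_contra h
      rw [Set.not_nonempty_iff_eq_empty] at h
      rw [hTdef, h, thickening_empty] at hx
      exact hx
    exact isClosed_frontier.exists_infDist_eq_dist hΓne x
  have hΓne : ∀ x ∈ T, Γ.Nonempty := fun x hx =>
    ⟨(hnear x hx).choose, (hnear x hx).choose_spec.1⟩
  have hlt : ∀ x ∈ T, infDist x Γ < R / 2 := fun x hx =>
    (mem_thickening_iff_infDist_lt (hΓne x hx)).1 hx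
  -- projection formula at any nearest point
  have hkey : ∀ x ∈ T, ∀ p ∈ Γ, infDist x Γ = dist x p →
      x - p = sgnDist E x • ν p ∧ |sgnDist E x| = infDist x Γ := by
    intro x hx p hp hd
    exact S13.proj_formula hR hEo hp hd (hν p hp) (by linarith [hlt x hx])
  -- uniqueness of the nearest point
  have huniq : ∀ x ∈ T, ∃! y, y ∈ Γ ∧ dist x y = infDist x Γ := by
    intro x hx
    obtain ⟨p, hp, hpd⟩ := hnear x hx
    refine ⟨p, ⟨hp, hpd.symm⟩, ?_⟩
    rintro q ⟨hq, hqd⟩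
    set d := sgnDist E x with hd
    obtain ⟨hfp, habsd⟩ := hkey x hx p hp hpd
    obtain ⟨hfq, -⟩ := hkey x hx q hq hqd.symm
    have hdlt : |d| < R / 2 := by rw [habsd]; exact hlt x hx
    obtain ⟨hd1, hd2⟩ := abs_lt.1 hdlt
    have hnp := (hν p hp).1
    have hnq := (hν q hq).1
    set t := ⟪ν p, ν q⟫ with ht
    have ht1 : t ≤ 1 := by
      have h5 := real_inner_le_norm (ν p) (ν q)
      rwa [hnp, hnq, mul_one, ← ht] at h5
    have hqp : q - p = d • ν p - d • ν q := by
      have h5 : q - p = (x - p) - (x - q) := by abel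
      rw [h5, hfp, hfq]
    have hipqp : ⟪ν p, q - p⟫ = d * (1 - t) := by
      rw [hqp, inner_sub_right, real_inner_smul_right, real_inner_smul_right,
        real_inner_self_eq_norm_sq, hnp, ← ht]
      ring
    have hnsq : ‖q - p‖ ^ 2 = d ^ 2 * (2 - 2 * t) := by
      have h1 : ‖q - p‖ ^ 2 = d ^ 2 * ‖ν p - ν q‖ ^ 2 := by
        rw [hqp, ← smul_sub, norm_smul, Real.norm_eq_abs, mul_pow, sq_abs]
      have h2 := norm_sub_sq_real (ν p) (ν q)
      rw [hnp, hnq, ← ht] at h2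
      rw [h1, h2]
      ring
    have hA := S13.inner_bound hR hEo (hν p hp) hq
    rw [hipqp, hnsq] at hA
    have habs2 : |d * (1 - t)| = |d| * (1 - t) := by
      rw [abs_mul, abs_of_nonneg (by linarith : (0:ℝ) ≤ 1 - t)]
    rw [habs2] at hA
    have hAbound : |d| ≤ R / 2 := hdlt.le
    have h1t : (0:ℝ) ≤ 1 - t := by linarith
    have hle : |d| * (1 - t) ≤ 0 := by
      nlinarith [hA, sq_abs d, abs_nonneg d,
        mul_nonneg (abs_nonneg d) (mul_nonneg (sub_nonneg.2 hAbound) h1t)]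
    have hd0 : |d| * (1 - t) = 0 :=
      le_antisymm hle (mul_nonneg (abs_nonneg d) h1t)
    have hzero : ‖q - p‖ ^ 2 = 0 := by
      have h7 : ‖q - p‖ ^ 2 = 2 * |d| * (|d| * (1 - t)) := by
        rw [hnsq, ← sq_abs d]; ring
      rw [h7, hd0, mul_zero]
    have h6 : q - p = 0 := norm_eq_zero.1 ((pow_eq_zero_iff (two_ne_zero)).1 hzero)
    rw [sub_eq_zero] at h6
    exact h6
  -- the projection map
  have hsel : ∀ x : En n, ∃ y, x ∈ T → y ∈ Γ ∧ dist x y = infDist x Γ := by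
    intro x
    by_cases h : x ∈ T
    · obtain ⟨p, hp, hpd⟩ := hnear x h
      exact ⟨p, fun _ => ⟨hp, hpd.symm⟩⟩
    · exact ⟨x, fun h' => absurd h' h⟩
  choose π hπ' using hsel
  have hπ : ∀ x ∈ T, π x ∈ Γ ∧ dist x (π x) = infDist x Γ := fun x hx => hπ' x hx
  have hform : ∀ x ∈ T, x - π x = sgnDist E x • ν (π x) := fun x hx =>
    (hkey x hx _ (hπ x hx).1 (hπ x hx).2.symm).1
  have habs : ∀ x ∈ T, |sgnDist E x| = infDist x Γ := fun x hx =>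
    (hkey x hx _ (hπ x hx).1 (hπ x hx).2.symm).2
  have hdb : ∀ x ∈ T, |sgnDist E x| ≤ R / 2 := fun x hx =>
    (habs x hx).symm ▸ (hlt x hx).le
  -- Lipschitz bound for the projection
  have hπlip : ∀ x ∈ T, ∀ y ∈ T, ‖π x - π y‖ ≤ 2 * ‖x - y‖ := by
    intro x hx y hy
    exact S13.proj_lip hR hEo (hπ x hx).1 (hπ y hy).1 (hν _ (hπ x hx).1)
      (hν _ (hπ y hy).1) (hform x hx) (hform y hy) (hdb x hx) (hdb y hy)
  -- key first-order expansion estimate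
  have hest : ∀ x ∈ T, ∀ y ∈ T,
      R * |sgnDist E y - sgnDist E x - ⟪ν (π x), y - x⟫| ≤ 6 * ‖y - x‖ ^ 2 := by
    intro x hx y hy
    exact S13.deriv_est hR hEo (hπ x hx).1 (hπ y hy).1 (hν _ (hπ x hx).1)
      (hν _ (hπ y hy).1) (hform x hx) (hform y hy) (hdb x hx) (hdb y hy)
  -- differentiability of the signed distance, with gradient the normal field
  have hgrad : ∀ x ∈ T, HasGradientAt (sgnDist E) (ν (π x)) x := by
    intro x hx
    rw [hasGradientAt_iff_hasFDerivAt]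
    refine HasFDerivAt.of_isLittleO ?_
    rw [Asymptotics.isLittleO_iff]
    intro c hc
    have hpos : 0 < c * R / 6 := by positivity
    filter_upwards [isOpen_thickening.mem_nhds hx, Metric.ball_mem_nhds x hpos]
      with y hyT hyB
    rw [mem_ball, dist_eq_norm] at hyB
    have hest' := hest x hx y hyT
    simp only [InnerProductSpace.toDual_apply_apply]
    rw [Real.norm_eq_abs]
    nlinarith [norm_nonneg (y - x), abs_nonneg (sgnDist E y - sgnDist E x - ⟪ν (π x), y - x⟫)]
  have hdiff : ∀ x ∈ T, DifferentiableAt ℝ (sgnDist E) x := fun x hx =>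
    (hgrad x hx).differentiableAt
  have hgradeq : ∀ x ∈ T, gradient (sgnDist E) x = ν (π x) := fun x hx =>
    (hgrad x hx).gradient
  refine ⟨huniq, ⟨π, hπ, ?_⟩, hdiff, ?_, ?_⟩
  · -- π is Lipschitz
    refine LipschitzOnWith.of_dist_le_mul fun x hx y hy => ?_
    rw [hCcoe, dist_eq_norm, dist_eq_norm]
    have h1 := hπlip x hx y hy
    nlinarith [norm_nonneg (x - y), hRinv, hR.le]
  · -- bounds on d and its gradient
    intro x hx
    constructor
    · calc |sgnDist E x| ≤ R / 2 := hdb x hx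
        _ ≤ C := by rw [hCdef]; linarith [hRinv]
    · rw [hgradeq x hx, (hν _ (hπ x hx).1).1, hCdef]
      linarith [hRinv]
  · -- the gradient is Lipschitz
    refine LipschitzOnWith.of_dist_le_mul fun x hx y hy => ?_
    rw [hCcoe, dist_eq_norm, dist_eq_norm, hgradeq x hx, hgradeq y hy]
    have h1 := S13.nml_lipschitz hR hEo (hπ x hx).1 (hπ y hy).1
      (hν _ (hπ x hx).1) (hν _ (hπ y hy).1)
    have h2 := hπlip x hx y hy
    nlinarith [norm_nonneg (ν (π x) - ν (π y)), norm_nonneg (x - y), sq_nonneg R,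
      mul_nonneg (norm_nonneg (x - y)) hR.le]
end
end
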